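/- arXiv:1307.0518 — 4 statements merged into one kernel-verified Lean document; each statement's English description precedes it below -/
import Mathlib

section
/- The trivial module ℤ admits a finite free resolution over the group ring ℤ[G] of length 3 with free modules of ranks 1, 3, 3, 1; that is, there is an exact sequence of ℤ[G]-modules 0 → ℤ[G] → ℤ[G]³ → ℤ[G]³ → ℤ[G] → ℤ → 0, where the final map is the augmentation map onto the trivial module ℤ. -/
/-- The automorphism of `ℤ²` (written multiplicatively) induced by a matrix `θ ∈ GL(2, ℤ)`. -/
noncomputable def torusAut (θ : GL (Fin 2) ℤ) : MulAut (Multiplicative (Fin 2 → ℤ)) :=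
  AddEquiv.toMultiplicative
    ((LinearMap.GeneralLinearGroup.generalLinearEquiv ℤ (Fin 2 → ℤ)
      (Matrix.GeneralLinearGroup.toLin θ)).toAddEquiv)

/-- The action of `ℤ` on `ℤ²` in which the generator `1 ∈ ℤ` acts via `θ`. -/
noncomputable def torusAction (θ : GL (Fin 2) ℤ) :
    Multiplicative ℤ →* MulAut (Multiplicative (Fin 2 → ℤ)) :=
  zpowersHom _ (torusAut θ)

/-- The fundamental group `G = ℤ² ⋊_θ ℤ` of the torus bundle with monodromy `θ`. -/
noncomputable def TorusBundleGroup (θ : GL (Fin 2) ℤ) : Type :=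
  SemidirectProduct (Multiplicative (Fin 2 → ℤ)) (Multiplicative ℤ) (torusAction θ)

noncomputable instance (θ : GL (Fin 2) ℤ) : Group (TorusBundleGroup θ) :=
  inferInstanceAs (Group (SemidirectProduct _ _ _))

/-- The augmentation map `ℤ[G] → ℤ`, sending every group element to `1`. -/
noncomputable def augmentation (G : Type) [Group G] : MonoidAlgebra ℤ G →+* ℤ :=
  (MonoidAlgebra.lift ℤ ℤ G 1).toRingHom

namespace TorusRes

open MonoidAlgebra

/-! ### Generalities on augmentation-type ideals in group rings -/

section Generic

variable {H : Type} [Group H]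

lemma aug_single (g : H) (z : ℤ) : augmentation H (MonoidAlgebra.single g z) = z := by
  simp [augmentation, MonoidAlgebra.lift_single]

lemma aug_of (g : H) : augmentation H (of ℤ H g) = 1 := by
  simpa using aug_single g 1

lemma aug_surj : Function.Surjective (augmentation H) := fun n =>
  ⟨MonoidAlgebra.single 1 n, aug_single 1 n⟩

end Generic

section GenericComm

variable {H : Type} [CommGroup H]

/-- core lemma: `of h - 1` lies in the ideal spanned by `of u - 1`, `u ∈ U`,
whenever `h` is in the subgroup closure of `U`. -/
lemma of_sub_one_mem_span (U : Set H) {h : H} (hh : h ∈ Subgroup.closure U) :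
    of ℤ H h - 1 ∈ Ideal.span ((fun u => of ℤ H u - 1) '' U) := by
  induction hh using Subgroup.closure_induction with
  | mem u hu => exact Ideal.subset_span ⟨u, hu, rfl⟩
  | one => rw [map_one, sub_self]; exact zero_mem _
  | mul x y hx hy ihx ihy =>
      have key : of ℤ H (x * y) - 1 = of ℤ H x * (of ℤ H y - 1) + (of ℤ H x - 1) := by
        rw [map_mul, mul_sub_one, sub_add_sub_cancel]
      rw [key]
      exact add_mem (Ideal.mul_mem_left _ _ ihy) ihx
  | inv x hx ihx =>
      have key : of ℤ H x⁻¹ - 1 = -(of ℤ H x⁻¹ * (of ℤ H x - 1)) := by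
        rw [mul_sub, mul_one, ← map_mul, inv_mul_cancel, map_one, neg_sub]
      rw [key]
      exact neg_mem (Ideal.mul_mem_left _ _ ihx)

lemma mk_of_eq (U : Set H) {g h : H} (hgh : g⁻¹ * h ∈ Subgroup.closure U) :
    Ideal.Quotient.mk (Ideal.span ((fun u => of ℤ H u - 1) '' U)) (of ℤ H g)
      = Ideal.Quotient.mk (Ideal.span ((fun u => of ℤ H u - 1) '' U)) (of ℤ H h) := by
  rw [Ideal.Quotient.eq]
  have key : of ℤ H g - of ℤ H h = -(of ℤ H g * (of ℤ H (g⁻¹ * h) - 1)) := by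
    rw [mul_sub, mul_one, ← map_mul, mul_inv_cancel_left, neg_sub]
  rw [key]
  exact neg_mem (Ideal.mul_mem_left _ _ (of_sub_one_mem_span U hgh))

/-- Factoring lemma: if the quotient by the ideal spanned by `of u - 1, u ∈ U` factors
through a ring hom `χ`, then `ker χ` is contained in that ideal. -/
lemma mem_span_of_ker (U : Set H) {Rc : Type} [Ring Rc]
    (χ : MonoidAlgebra ℤ H →+* Rc)
    (ψ : Rc →+* MonoidAlgebra ℤ H ⧸ Ideal.span ((fun u => of ℤ H u - 1) '' U))
    (hcomm : ∀ h : H, ψ (χ (of ℤ H h)) =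
      Ideal.Quotient.mk (Ideal.span ((fun u => of ℤ H u - 1) '' U)) (of ℤ H h))
    {r : MonoidAlgebra ℤ H} (hr : χ r = 0) :
    r ∈ Ideal.span ((fun u => of ℤ H u - 1) '' U) := by
  have hfac : ψ.comp χ = Ideal.Quotient.mk (Ideal.span ((fun u => of ℤ H u - 1) '' U)) := by
    apply MonoidAlgebra.ringHom_ext
    · intro b
      have h1 : (MonoidAlgebra.single (1:H) b : MonoidAlgebra ℤ H) = (b : MonoidAlgebra ℤ H) :=
        (MonoidAlgebra.intCast_def b).symm
      rw [h1, map_intCast, map_intCast]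
    · intro a; exact hcomm a
  have h2 : Ideal.Quotient.mk (Ideal.span ((fun u => of ℤ H u - 1) '' U)) r = 0 := by
    rw [← hfac]
    simp only [RingHom.comp_apply, hr, map_zero]
  exact (Ideal.Quotient.eq_zero_iff_mem).mp h2

/-- The augmentation ideal is spanned by `of u - 1, of v - 1` if `u, v` generate `H`. -/
lemma exists_of_aug_eq_zero {u v : H} (hU : Subgroup.closure ({u, v} : Set H) = ⊤)
    {r : MonoidAlgebra ℤ H} (hr : augmentation H r = 0) :
    ∃ p q, r = p * (of ℤ H u - 1) + q * (of ℤ H v - 1) := by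
  have h := mem_span_of_ker {u, v} (augmentation H) (Int.castRingHom _)
    (fun h => by
      rw [aug_of, map_one]
      have : (1 : MonoidAlgebra ℤ H) = of ℤ H 1 := by rw [map_one]
      calc (1 : MonoidAlgebra ℤ H ⧸ _) = Ideal.Quotient.mk _ (of ℤ H 1) := by rw [map_one, map_one]
        _ = _ := mk_of_eq {u, v} (by rw [hU]; trivial)) hr
  rw [Set.image_pair] at h
  obtain ⟨p, q, hpq⟩ := Ideal.mem_span_pair.mp h
  exact ⟨p, q, hpq.symm⟩

lemma of_sub_one_ne_zero {g : H} (hg : g ≠ 1) : of ℤ H g - 1 ≠ 0 := by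
  intro h
  have h2 : (of ℤ H g - 1 : MonoidAlgebra ℤ H).coeff g = (0 : MonoidAlgebra ℤ H).coeff g := by rw [h]
  rw [MonoidAlgebra.one_def] at h2
  have h3 : (MonoidAlgebra.single g (1:ℤ) - MonoidAlgebra.single 1 1 : MonoidAlgebra ℤ H).coeff g
      = ((0 : MonoidAlgebra ℤ H)).coeff g := h2
  rw [MonoidAlgebra.coeff_sub, MonoidAlgebra.coeff_single, MonoidAlgebra.coeff_single,
    Finsupp.sub_apply, Finsupp.single_eq_same, Finsupp.single_eq_of_ne' (Ne.symm hg)] at h3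
  norm_num at h3

end GenericComm

/-! ### The group ring of `ℤ²` -/

section Slayer

abbrev Nn : Type := Multiplicative (Fin 2 → ℤ)

def aN : Nn := Multiplicative.ofAdd (Pi.single 0 1)
def bN : Nn := Multiplicative.ofAdd (Pi.single 1 1)

noncomputable def Xa : MonoidAlgebra ℤ Nn := of ℤ Nn aN
noncomputable def Xb : MonoidAlgebra ℤ Nn := of ℤ Nn bN

lemma nn_eq_pow (v : Nn) : v = aN ^ (Multiplicative.toAdd v 0) * bN ^ (Multiplicative.toAdd v 1) := by
  have key : Multiplicative.toAdd v
      = (Multiplicative.toAdd v 0) • Pi.single (0 : Fin 2) (1:ℤ)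
        + (Multiplicative.toAdd v 1) • Pi.single (1 : Fin 2) (1:ℤ) := by
    funext i
    fin_cases i <;> simp [Pi.single_apply, smul_eq_mul]
  conv_lhs => rw [← ofAdd_toAdd v, key]
  rw [ofAdd_add, ofAdd_zsmul, ofAdd_zsmul]
  rfl

lemma closure_ab : Subgroup.closure ({aN, bN} : Set Nn) = ⊤ := by
  rw [eq_top_iff]
  intro v _
  rw [nn_eq_pow v]
  exact mul_mem (zpow_mem (Subgroup.subset_closure (by simp)) _)
    (zpow_mem (Subgroup.subset_closure (by simp)) _)

lemma bN_ne_one : bN ≠ 1 := by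
  intro h
  have := congrFun (congrArg Multiplicative.toAdd h) 1
  simp [bN] at this

lemma aN_ne_one : aN ≠ 1 := by
  intro h
  have := congrFun (congrArg Multiplicative.toAdd h) 0
  simp [aN] at this

lemma Xb_sub_one_ne_zero : Xb - 1 ≠ 0 := of_sub_one_ne_zero bN_ne_one

lemma K2 {r : MonoidAlgebra ℤ Nn} (hr : augmentation Nn r = 0) :
    ∃ p q, r = p * (Xa - 1) + q * (Xb - 1) :=
  exists_of_aug_eq_zero closure_ab hr

/-- The map killing `bN`, remembering the first coordinate. -/
def fEta : Nn →* Multiplicative ℤ :=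
  MonoidHom.mk' (fun v => Multiplicative.ofAdd (Multiplicative.toAdd v 0))
    (fun a b => by simp [ofAdd_add])

noncomputable def eta : MonoidAlgebra ℤ Nn →+* MonoidAlgebra ℤ (Multiplicative ℤ) :=
  MonoidAlgebra.mapDomainRingHom ℤ fEta

lemma eta_of (v : Nn) : eta (of ℤ Nn v) = of ℤ (Multiplicative ℤ) (fEta v) := by
  simp [eta, MonoidAlgebra.mapDomainRingHom, MonoidAlgebra.of_apply, Finsupp.mapDomain_single]

lemma fEta_aN : fEta aN = Multiplicative.ofAdd (1:ℤ) := by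
  simp [fEta, aN]

lemma fEta_bN : fEta bN = 1 := by
  simp [fEta, bN]

lemma eta_ker {p : MonoidAlgebra ℤ Nn} (hp : eta p = 0) : ∃ w, p = w * (Xb - 1) := by
  have h := mem_span_of_ker {bN} eta
    ((Ideal.Quotient.mk _).comp (MonoidAlgebra.mapDomainRingHom ℤ (zpowersHom Nn aN)))
    (fun h => by
      rw [eta_of]
      have h1 : (MonoidAlgebra.mapDomainRingHom ℤ (zpowersHom Nn aN))
          (of ℤ (Multiplicative ℤ) (fEta h)) = of ℤ Nn (aN ^ (Multiplicative.toAdd h 0)) := by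
        simp [MonoidAlgebra.mapDomainRingHom, MonoidAlgebra.of_apply, Finsupp.mapDomain_single,
          fEta, zpowersHom_apply]
      rw [RingHom.comp_apply, h1]
      apply mk_of_eq
      have key : (aN ^ (Multiplicative.toAdd h 0))⁻¹ * h = bN ^ (Multiplicative.toAdd h 1) := by
        calc (aN ^ (Multiplicative.toAdd h 0))⁻¹ * h
            = (aN ^ (Multiplicative.toAdd h 0))⁻¹
              * (aN ^ (Multiplicative.toAdd h 0) * bN ^ (Multiplicative.toAdd h 1)) := by
              rw [← nn_eq_pow h]
          _ = bN ^ (Multiplicative.toAdd h 1) := inv_mul_cancel_left _ _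
      rw [key]
      exact zpow_mem (Subgroup.subset_closure (Set.mem_singleton bN)) _) hp
  rw [Set.image_singleton] at h
  obtain ⟨w, hw⟩ := Ideal.mem_span_singleton'.mp h
  exact ⟨w, hw.symm⟩

lemma K3 {p q : MonoidAlgebra ℤ Nn} (h : p * (Xa - 1) + q * (Xb - 1) = 0) :
    ∃ w, p = w * (Xb - 1) ∧ q = -(w * (Xa - 1)) := by
  have h1 : eta p * (of ℤ (Multiplicative ℤ) (Multiplicative.ofAdd (1:ℤ)) - 1) = 0 := by
    have h2 := congrArg eta h
    rw [map_add, map_mul, map_mul, map_sub, map_sub, map_one, map_zero] at h2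
    rw [Xa, Xb, eta_of, eta_of, fEta_aN, fEta_bN] at h2
    have hone : of ℤ (Multiplicative ℤ) (1 : Multiplicative ℤ) = 1 := map_one _
    rw [hone, sub_self, mul_zero, add_zero] at h2
    exact h2
  have h3 : eta p = 0 := by
    rcases mul_eq_zero.mp h1 with h | h
    · exact h
    · exact absurd h (of_sub_one_ne_zero (by
        intro hc
        have := congrArg Multiplicative.toAdd hc
        simpa using this))
  obtain ⟨w, hw⟩ := eta_ker h3
  refine ⟨w, hw, ?_⟩
  have h4 : (q + w * (Xa - 1)) * (Xb - 1) = 0 := by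
    rw [hw] at h
    linear_combination h
  rcases mul_eq_zero.mp h4 with h5 | h5
  · exact eq_neg_of_add_eq_zero_left h5
  · exact absurd h5 Xb_sub_one_ne_zero

end Slayer

/-! ### The group ring of `G = ℤ² ⋊ ℤ` -/

section Glayer

open SemidirectProduct

variable (θ : GL (Fin 2) ℤ)

abbrev Gg : Type := SemidirectProduct Nn (Multiplicative ℤ) (torusAction θ)

abbrev Rr : Type := MonoidAlgebra ℤ (Gg θ)

/-- the inclusion `ℤ[ℤ²] → ℤ[G]`. -/
noncomputable def ι : MonoidAlgebra ℤ Nn →+* Rr θ :=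
  MonoidAlgebra.mapDomainRingHom ℤ (inl : Nn →* Gg θ)

/-- the element `tᵏ` of `ℤ[G]`. -/
noncomputable def Tk (k : ℤ) : Rr θ := of ℤ (Gg θ) (inr (Multiplicative.ofAdd k))

/-- the element `t` of `ℤ[G]`. -/
noncomputable def Tt : Rr θ := Tk θ 1

/-- the ring automorphism of `ℤ[ℤ²]` induced by `θ`. -/
noncomputable def σS : MonoidAlgebra ℤ Nn ≃ₐ[ℤ] MonoidAlgebra ℤ Nn :=
  MonoidAlgebra.domCongr ℤ ℤ (torusAut θ : Nn ≃* Nn)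

/-- the ring automorphism of `ℤ[ℤ²]` induced by `θ⁻¹`. -/
noncomputable def σinvS : MonoidAlgebra ℤ Nn ≃ₐ[ℤ] MonoidAlgebra ℤ Nn :=
  MonoidAlgebra.domCongr ℤ ℤ ((torusAut θ).symm : Nn ≃* Nn)

lemma iota_single (n : Nn) (z : ℤ) :
    ι θ (MonoidAlgebra.single n z) = MonoidAlgebra.single (inl n : Gg θ) z := by
  simp [ι, MonoidAlgebra.mapDomainRingHom, Finsupp.mapDomain_single]

lemma iota_of (n : Nn) : ι θ (of ℤ Nn n) = of ℤ (Gg θ) (inl n) := by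
  rw [MonoidAlgebra.of_apply, MonoidAlgebra.of_apply]; exact iota_single θ n 1

lemma sigmaS_single (n : Nn) (z : ℤ) :
    σS θ (MonoidAlgebra.single n z) = MonoidAlgebra.single (torusAut θ n) z := by
  simp [σS]

lemma act_ofAdd_one : torusAction θ (Multiplicative.ofAdd (1:ℤ)) = torusAut θ := by
  rw [torusAction, zpowersHom_apply]
  simp

lemma act_ofAdd_neg_one :
    torusAction θ (Multiplicative.ofAdd (-1:ℤ)) = (torusAut θ)⁻¹ := by
  rw [torusAction, zpowersHom_apply]
  simp

lemma inr_mul_inl' (c : Multiplicative ℤ) (n : Nn) :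
    (inr c * inl n : Gg θ) = inl (torusAction θ c n) * inr c := by
  rw [inl_aut]
  simp [mul_assoc]

/-- `t ⬝ ι s = ι (σ s) ⬝ t` in `ℤ[G]`. -/
lemma T_mul_iota (s : MonoidAlgebra ℤ Nn) : Tt θ * ι θ s = ι θ (σS θ s) * Tt θ := by
  induction s using MonoidAlgebra.induction_linear with
  | zero => simp
  | add f g hf hg => simp only [map_add, add_mul, mul_add, hf, hg]
  | single n z =>
      rw [iota_single, sigmaS_single, iota_single, Tt, Tk, MonoidAlgebra.of_apply,
        MonoidAlgebra.single_mul_single, MonoidAlgebra.single_mul_single, one_mul, mul_one,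
        inr_mul_inl', act_ofAdd_one]

/-- the embedding `n ↦ tᵏ n` of `ℤ²` into `G`. -/
noncomputable def em (k : ℤ) (n : Nn) : Gg θ := inr (Multiplicative.ofAdd k) * inl n

lemma em_def (k : ℤ) : em θ k = fun n => inr (Multiplicative.ofAdd k) * inl n := rfl

lemma em_inj (k : ℤ) : Function.Injective (em θ k) := by
  intro n m h
  have h2 := congrArg SemidirectProduct.left h
  simp only [em, mul_left, left_inr, right_inr, left_inl, one_mul] at h2
  exact (torusAction θ (Multiplicative.ofAdd k)).injective h2

lemma em_right (k : ℤ) (n : Nn) : (em θ k n).right = Multiplicative.ofAdd k := by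
  simp [em, mul_right]

lemma em_surj (g : Gg θ) :
    em θ (Multiplicative.toAdd g.right) ((torusAction θ g.right)⁻¹ g.left) = g := by
  rw [em, ofAdd_toAdd]
  rw [inr_mul_inl']
  simp only [MulAut.apply_inv_self]
  exact inl_left_mul_inr_right g

/-- the `k`-th coefficient map `ℤ[G] → ℤ[ℤ²]`. -/
noncomputable def cf (k : ℤ) : Rr θ →+ MonoidAlgebra ℤ Nn :=
  MonoidAlgebra.comapDomainAddMonoidHom (em θ k) (em_inj θ k)

lemma cf_apply (k : ℤ) (r : Rr θ) (n : Nn) : (cf θ k r).coeff n = r.coeff (em θ k n) := rfl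

/-- a nonzero element has a nonzero coefficient. -/
lemma eq_zero_of_cf (r : Rr θ) (h : ∀ k, cf θ k r = 0) : r = 0 := by
  ext g
  have h2 : (cf θ (Multiplicative.toAdd g.right) r).coeff ((torusAction θ g.right)⁻¹ g.left)
      = (0 : MonoidAlgebra ℤ Nn).coeff ((torusAction θ g.right)⁻¹ g.left) := by rw [h]
  rw [cf_apply, em_surj] at h2
  simpa using h2

lemma cf_mul_iota (k : ℤ) (r : Rr θ) (s : MonoidAlgebra ℤ Nn) :
    cf θ k (r * ι θ s) = cf θ k r * s := by
  induction s using MonoidAlgebra.induction_linear with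
  | zero => simp
  | add f g hf hg => rw [map_add, mul_add, map_add, hf, hg, mul_add]
  | single n z =>
      rw [iota_single]
      ext m
      rw [cf_apply, MonoidAlgebra.mul_single_apply, MonoidAlgebra.mul_single_apply, cf_apply]
      congr 2
      rw [em, em, ← map_inv, mul_assoc, ← map_mul]

lemma cf_mul_T (k : ℤ) (r : Rr θ) :
    cf θ k (r * Tt θ) = σinvS θ (cf θ (k-1) r) := by
  ext m
  have key : em θ (k-1) (torusAut θ m) * inr (Multiplicative.ofAdd (1:ℤ)) = em θ k m := by
    rw [em, em]
    have h4 : (inr (Multiplicative.ofAdd k) : Gg θ)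
        = inr (Multiplicative.ofAdd (k-1)) * inr (Multiplicative.ofAdd (1:ℤ)) := by
      rw [← map_mul, ← ofAdd_add]
      norm_num
    rw [h4, mul_assoc, mul_assoc]
    congr 1
    rw [inr_mul_inl', act_ofAdd_one]
  rw [cf_apply, Tt, Tk, MonoidAlgebra.of_apply]
  rw [MonoidAlgebra.coeff_mul_single_eq_coeff_mul (x := r) (em θ (k-1) (torusAut θ m))
    (fun a _ => ⟨fun h => mul_right_cancel (h.trans key.symm), fun h => by rw [h, key]⟩)]
  rw [mul_one]
  have h3 : ((σinvS θ) (cf θ (k - 1) r)).coeff m = (cf θ (k-1) r).coeff (torusAut θ m) := by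
    rw [σinvS, MonoidAlgebra.domCongr_apply, MulEquiv.symm_symm]
  rw [h3, cf_apply]

lemma iota_apply_em (s : MonoidAlgebra ℤ Nn) (i : ℤ) (m : Nn) :
    (ι θ s).coeff (em θ i m) = if i = 0 then s.coeff m else 0 := by
  by_cases h : i = 0
  · subst h
    have h1 : em θ 0 m = inl m := by
      rw [em]
      have : Multiplicative.ofAdd (0:ℤ) = 1 := rfl
      rw [this, map_one, one_mul]
    rw [h1, if_pos rfl, ι]
    exact Finsupp.mapDomain_apply inl_injective s.coeff m
  · rw [if_neg h, ι]
    show Finsupp.mapDomain (inl : Nn →* Gg θ) s.coeff (em θ i m) = 0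
    apply Finsupp.mapDomain_notin_range
    intro hc
    obtain ⟨n, hn⟩ := Set.mem_range.mp hc
    have h2 := congrArg SemidirectProduct.right hn
    rw [em_right] at h2
    simp only [right_inl] at h2
    apply h
    have h3 : Multiplicative.toAdd (1 : Multiplicative ℤ)
        = Multiplicative.toAdd (Multiplicative.ofAdd i) := congrArg _ h2
    simpa using h3.symm

lemma cf_Tk_mul_iota (j k : ℤ) (s : MonoidAlgebra ℤ Nn) :
    cf θ j (Tk θ k * ι θ s) = if j = k then s else 0 := by
  ext m
  rw [cf_apply, Tk, MonoidAlgebra.of_apply, MonoidAlgebra.single_mul_apply, one_mul]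
  have key : (inr (Multiplicative.ofAdd k) : Gg θ)⁻¹ * em θ j m = em θ (j - k) m := by
    rw [em, em, ← mul_assoc, ← map_inv, ← map_mul, ← ofAdd_neg, ← ofAdd_add]
    congr 2
    ring
  rw [key, iota_apply_em]
  have h5 : j - k = 0 ↔ j = k := sub_eq_zero
  by_cases h : j = k
  · rw [if_pos h, if_pos (h5.mpr h)]
  · rw [if_neg h, if_neg (fun hc => h (h5.mp hc))]
    rfl

/-- the finite set of `t`-degrees appearing in `r`. -/
noncomputable def Fsupp (r : Rr θ) : Finset ℤ :=
  r.coeff.support.image (fun g => Multiplicative.toAdd (SemidirectProduct.right g))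

lemma cf_eq_zero_of_not_mem {r : Rr θ} {k : ℤ} (h : k ∉ Fsupp θ r) : cf θ k r = 0 := by
  ext m
  rw [cf_apply]
  by_contra hc
  apply h
  have hmem : em θ k m ∈ r.coeff.support := Finsupp.mem_support_iff.mpr (by
    intro h0
    exact hc (by rw [h0]; rfl))
  refine Finset.mem_image.mpr ⟨em θ k m, hmem, ?_⟩
  rw [em_right]
  rfl

lemma cf_ne_zero_max {r : Rr θ} (hr : r ≠ 0) :
    ∃ k₀ : ℤ, cf θ k₀ r ≠ 0 ∧ ∀ k > k₀, cf θ k r = 0 := by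
  have hne : (Fsupp θ r).Nonempty := by
    obtain ⟨g, hg⟩ := Finsupp.support_nonempty_iff.mpr (MonoidAlgebra.coeff_eq_zero.not.mpr hr)
    exact ⟨_, Finset.mem_image.mpr ⟨g, hg, rfl⟩⟩
  refine ⟨(Fsupp θ r).max' hne, ?_, fun k hk => cf_eq_zero_of_not_mem θ (fun hmem =>
    absurd (Finset.le_max' _ _ hmem) (not_le.mpr hk))⟩
  obtain ⟨g, hg, hgr⟩ := Finset.mem_image.mp ((Fsupp θ r).max'_mem hne)
  intro h0
  have h2 : (cf θ ((Fsupp θ r).max' hne) r).coeff ((torusAction θ g.right)⁻¹ g.left) = 0 := by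
    rw [h0]; rfl
  rw [cf_apply] at h2
  rw [← hgr] at h2
  rw [em_surj θ g] at h2
  exact (Finsupp.mem_support_iff.mp hg) h2

/-- assembly of a finitely supported family of coefficients. -/
noncomputable def asm (F : Finset ℤ) (w : ℤ → MonoidAlgebra ℤ Nn) : Rr θ :=
  ∑ k ∈ F, Tk θ k * ι θ (w k)

lemma cf_asm (F : Finset ℤ) (w : ℤ → MonoidAlgebra ℤ Nn) (j : ℤ) :
    cf θ j (asm θ F w) = if j ∈ F then w j else 0 := by
  rw [asm, map_sum]
  have h1 : ∀ k ∈ F, cf θ j (Tk θ k * ι θ (w k)) = if j = k then w k else 0 :=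
    fun k _ => cf_Tk_mul_iota θ j k (w k)
  rw [Finset.sum_congr rfl h1]
  simp only [Finset.sum_ite_eq, eq_comm]

/-- if moreover `w` vanishes outside `F`, the coefficients of `asm F w` are exactly `w`. -/
lemma cf_asm' {F : Finset ℤ} {w : ℤ → MonoidAlgebra ℤ Nn} (hw : ∀ k ∉ F, w k = 0) (j : ℤ) :
    cf θ j (asm θ F w) = w j := by
  rw [cf_asm]
  by_cases h : j ∈ F
  · rw [if_pos h]
  · rw [if_neg h, hw j h]

/-- the projection `ℤ[G] → ℤ[ℤ]`. -/
noncomputable def ρp : Rr θ →+* MonoidAlgebra ℤ (Multiplicative ℤ) :=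
  MonoidAlgebra.mapDomainRingHom ℤ (rightHom : Gg θ →* Multiplicative ℤ)

/-- the section `ℤ[ℤ] → ℤ[G]`. -/
noncomputable def ℓp : MonoidAlgebra ℤ (Multiplicative ℤ) →+* Rr θ :=
  MonoidAlgebra.mapDomainRingHom ℤ (inr : Multiplicative ℤ →* Gg θ)

lemma cf_ellp (v : MonoidAlgebra ℤ (Multiplicative ℤ)) (k : ℤ) :
    cf θ k (ℓp θ v) = MonoidAlgebra.single 1 (v.coeff (Multiplicative.ofAdd k)) := by
  induction v using MonoidAlgebra.induction_linear with
  | zero => simp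
  | add f g hf hg =>
      rw [map_add, map_add, hf, hg, MonoidAlgebra.coeff_add, Finsupp.add_apply]
      exact (MonoidAlgebra.single_add _ _ _).symm
  | single c z =>
      have h1 : ℓp θ (MonoidAlgebra.single c z) = MonoidAlgebra.single (inr c : Gg θ) z := by
        simp [ℓp, MonoidAlgebra.mapDomainRingHom, Finsupp.mapDomain_single]
      rw [h1]
      ext m
      rw [cf_apply]
      simp only [MonoidAlgebra.coeff_single, Finsupp.single_apply]
      have h2 : em θ k 1 = inr (Multiplicative.ofAdd k) := by
        rw [em, map_one, mul_one]
      by_cases hm : (1 : Nn) = m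
      · rw [if_pos hm, ← hm, h2]
        by_cases hc : c = Multiplicative.ofAdd k
        · rw [if_pos (by rw [hc]), if_pos hc]
        · rw [if_neg (fun h => hc (inr_injective h)), if_neg hc]
      · rw [if_neg hm, if_neg]
        intro h4
        apply hm
        have h5 := congrArg SemidirectProduct.left h4
        simp only [left_inr, em, mul_left, left_inl, right_inr, one_mul] at h5
        exact ((torusAction θ (Multiplicative.ofAdd k)).injective
          (by rw [map_one]; exact h5.symm)).symm

lemma rho_ellp (v : MonoidAlgebra ℤ (Multiplicative ℤ)) : ρp θ (ℓp θ v) = v := by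
  induction v using MonoidAlgebra.induction_linear with
  | zero => simp
  | add f g hf hg => rw [map_add, map_add, hf, hg]
  | single c z =>
      have h1 : ℓp θ (MonoidAlgebra.single c z) = MonoidAlgebra.single (inr c : Gg θ) z := by
        simp [ℓp, MonoidAlgebra.mapDomainRingHom, Finsupp.mapDomain_single]
      rw [h1]
      have h2 : ρp θ (MonoidAlgebra.single (inr c : Gg θ) z)
          = MonoidAlgebra.single (rightHom (inr c : Gg θ)) z := by
        simp [ρp, MonoidAlgebra.mapDomainRingHom, Finsupp.mapDomain_single]
      rw [h2, rightHom_inr]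

lemma aug_domCongr (e : Nn ≃* Nn) (s : MonoidAlgebra ℤ Nn) :
    augmentation Nn (MonoidAlgebra.domCongr ℤ ℤ e s) = augmentation Nn s := by
  induction s using MonoidAlgebra.induction_linear with
  | zero => simp
  | add f g hf hg => rw [map_add, map_add, map_add, hf, hg]
  | single n z => rw [MonoidAlgebra.domCongr_single, aug_single, aug_single]

lemma aug_sigmaS (s : MonoidAlgebra ℤ Nn) :
    augmentation Nn (σS θ s) = augmentation Nn s := aug_domCongr (torusAut θ : Nn ≃* Nn) s

lemma aug_sigmainvS (s : MonoidAlgebra ℤ Nn) :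
    augmentation Nn (σinvS θ s) = augmentation Nn s :=
  aug_domCongr ((torusAut θ).symm : Nn ≃* Nn) s

lemma aug_comp_rho (r : Rr θ) :
    augmentation (Multiplicative ℤ) (ρp θ r) = augmentation (Gg θ) r := by
  induction r using MonoidAlgebra.induction_linear with
  | zero => simp
  | add f g hf hg => rw [map_add, map_add, map_add, hf, hg]
  | single g z =>
      have h2 : ρp θ (MonoidAlgebra.single g z)
          = MonoidAlgebra.single (rightHom g) z := by
        simp [ρp, MonoidAlgebra.mapDomainRingHom, Finsupp.mapDomain_single]
      rw [h2, aug_single, aug_single]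

lemma rho_cf (r : Rr θ) (k : ℤ) :
    (ρp θ r).coeff (Multiplicative.ofAdd k) = augmentation Nn (cf θ k r) := by
  induction r using MonoidAlgebra.induction_linear with
  | zero => simp
  | add f g hf hg => rw [map_add, map_add, MonoidAlgebra.coeff_add, Finsupp.add_apply, hf, hg, map_add]
  | single g z =>
      have h2 : ρp θ (MonoidAlgebra.single g z)
          = MonoidAlgebra.single (rightHom g) z := by
        simp [ρp, MonoidAlgebra.mapDomainRingHom, Finsupp.mapDomain_single]
      rw [h2]
      rw [MonoidAlgebra.coeff_single, Finsupp.single_apply]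
      by_cases hc : (rightHom g : Multiplicative ℤ) = Multiplicative.ofAdd k
      · rw [if_pos hc]
        have hk : Multiplicative.toAdd (g.right) = k := by
          rw [show g.right = rightHom g from rfl, hc]
          rfl
        have hg : em θ k ((torusAction θ g.right)⁻¹ g.left) = g := by
          rw [← hk]
          exact em_surj θ g
        have h3 : cf θ k (MonoidAlgebra.single g z)
            = MonoidAlgebra.single ((torusAction θ g.right)⁻¹ g.left) z := by
          ext n
          rw [cf_apply, MonoidAlgebra.coeff_single, MonoidAlgebra.coeff_single, Finsupp.single_apply,
            Finsupp.single_apply]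
          by_cases hn : (torusAction θ g.right)⁻¹ g.left = n
          · rw [if_pos hn, if_pos (by rw [← hn, hg])]
          · rw [if_neg hn, if_neg (fun hh => hn (em_inj θ k (by rw [hg, hh])))]
        rw [h3, aug_single]
      · rw [if_neg hc]
        have h3 : cf θ k (MonoidAlgebra.single g z) = 0 := by
          ext n
          rw [cf_apply, MonoidAlgebra.coeff_single, Finsupp.single_apply, if_neg,
            MonoidAlgebra.coeff_zero, Finsupp.coe_zero, Pi.zero_apply]
          intro hh
          exact hc (by rw [hh]; rw [show rightHom (em θ k n) = (em θ k n).right from rfl,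
            em_right])
        rw [h3, map_zero]

lemma closure_t :
    Subgroup.closure ({Multiplicative.ofAdd (1:ℤ)} : Set (Multiplicative ℤ)) = ⊤ := by
  rw [eq_top_iff]
  intro v _
  have hv : v = (Multiplicative.ofAdd (1:ℤ)) ^ (Multiplicative.toAdd v) := by
    rw [← ofAdd_zsmul, smul_eq_mul, mul_one, ofAdd_toAdd]
  rw [hv]
  exact zpow_mem (Subgroup.subset_closure (Set.mem_singleton _)) _

lemma laurent_ker {v : MonoidAlgebra ℤ (Multiplicative ℤ)}
    (hv : augmentation (Multiplicative ℤ) v = 0) :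
    ∃ lam, v = lam * (of ℤ (Multiplicative ℤ) (Multiplicative.ofAdd (1:ℤ)) - 1) := by
  obtain ⟨p, q, hpq⟩ := exists_of_aug_eq_zero
    (u := Multiplicative.ofAdd (1:ℤ)) (v := Multiplicative.ofAdd (1:ℤ))
    (by rw [Set.pair_eq_singleton]; exact closure_t) hv
  exact ⟨p + q, by rw [hpq, add_mul]⟩

lemma K2σ {r : MonoidAlgebra ℤ Nn} (hr : augmentation Nn r = 0) :
    ∃ p q, r = p * (σS θ Xa - 1) + q * (σS θ Xb - 1) := by
  have h2 : augmentation Nn ((σS θ).symm r) = 0 := by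
    rw [σS, MonoidAlgebra.domCongr_symm, aug_domCongr, hr]
  obtain ⟨p, q, hpq⟩ := K2 h2
  refine ⟨σS θ p, σS θ q, ?_⟩
  have h3 := congrArg (σS θ) hpq
  rw [AlgEquiv.apply_symm_apply, map_add, map_mul, map_mul, map_sub, map_sub, map_one] at h3
  exact h3

lemma K3σ {p q : MonoidAlgebra ℤ Nn}
    (h : p * (σS θ Xa - 1) + q * (σS θ Xb - 1) = 0) :
    ∃ w, p = w * (σS θ Xb - 1) ∧ q = -(w * (σS θ Xa - 1)) := by
  have h2 := congrArg (σS θ).symm h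
  simp only [map_add, map_mul, map_sub, map_one, map_zero,
    AlgEquiv.symm_apply_apply] at h2
  obtain ⟨w, hw1, hw2⟩ := K3 h2
  refine ⟨σS θ w, ?_, ?_⟩
  · have h3 := congrArg (σS θ) hw1
    rw [AlgEquiv.apply_symm_apply, map_mul, map_sub, map_one] at h3
    exact h3
  · have h3 := congrArg (σS θ) hw2
    rw [AlgEquiv.apply_symm_apply, map_neg, map_mul, map_sub, map_one] at h3
    exact h3

/-- right multiplication by a nonzero element of `ℤ[ℤ²]` is injective on `ℤ[G]`. -/
lemma reg_right {u : Rr θ} {s : MonoidAlgebra ℤ Nn} (hs : s ≠ 0) (hu : u * ι θ s = 0) :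
    u = 0 := by
  apply eq_zero_of_cf
  intro k
  have h1 : cf θ k u * s = 0 := by rw [← cf_mul_iota, hu, map_zero]
  rcases mul_eq_zero.mp h1 with h | h
  · exact h
  · exact absurd h hs

/-- right multiplication by `ι e - t` is injective on `ℤ[G]`. -/
lemma reg_right_T {e : MonoidAlgebra ℤ Nn} {u : Rr θ} (hu : u * (ι θ e - Tt θ) = 0) :
    u = 0 := by
  by_contra hne
  obtain ⟨k₀, hk₀, htop⟩ := cf_ne_zero_max θ hne
  have h1 : cf θ (k₀+1) (u * ι θ e) - cf θ (k₀+1) (u * Tt θ) = 0 := by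
    rw [← map_sub, ← mul_sub, hu, map_zero]
  rw [cf_mul_iota, cf_mul_T, show (k₀ + 1 - 1 : ℤ) = k₀ from by ring,
    htop (k₀+1) (by omega), zero_mul, zero_sub, neg_eq_zero] at h1
  exact hk₀ ((σinvS θ).injective (by rw [h1, map_zero]))

/-- a finitely supported function that satisfies `f k = f (k-1)` vanishes. -/
lemma const_fin_zero (f : ℤ → ℤ) (F : Finset ℤ) (h0 : ∀ k ∉ F, f k = 0)
    (hstep : ∀ k, f k = f (k-1)) : ∀ k, f k = 0 := by
  intro k
  have hdown : ∀ n : ℕ, f k = f (k - n) := by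
    intro n
    induction n with
    | zero => norm_num
    | succ n ih =>
        rw [ih, hstep (k - n)]
        congr 1
        push_cast
        ring
  obtain ⟨j, hj⟩ := (((Set.Iic_infinite k).diff (F.finite_toSet))).nonempty
  obtain ⟨hj1, hj2⟩ := hj
  have hjk : j ≤ k := hj1
  have : f k = f j := by
    rw [hdown (k - j).toNat]
    congr 1
    omega
  rw [this]
  exact h0 j hj2

/-- right multiplication as a linear map on the left regular module. -/
noncomputable def rmul1 (c : Rr θ) : Rr θ →ₗ[Rr θ] Rr θ where
  toFun r := r * c
  map_add' x y := add_mul x y c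
  map_smul' m x := by simp only [smul_eq_mul, RingHom.id_apply, mul_assoc]

/-- `v ↦ v ⬝ c` (dot product with right coefficients). -/
noncomputable def rcol (c : Fin 3 → Rr θ) : (Fin 3 → Rr θ) →ₗ[Rr θ] Rr θ where
  toFun v := v 0 * c 0 + v 1 * c 1 + v 2 * c 2
  map_add' x y := by
    simp only [Pi.add_apply, add_mul]
    abel
  map_smul' m x := by
    simp only [Pi.smul_apply, smul_eq_mul, RingHom.id_apply, mul_assoc, mul_add]

/-- `v ↦ v ⬝ M` (row vector times matrix, right coefficients). -/
noncomputable def dmat (M : Fin 3 → Fin 3 → Rr θ) :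
    (Fin 3 → Rr θ) →ₗ[Rr θ] (Fin 3 → Rr θ) :=
  LinearMap.pi (fun j => rcol θ (fun i => M i j))

/-- `r ↦ r ⬝ c` (row vector). -/
noncomputable def drow (c : Fin 3 → Rr θ) : Rr θ →ₗ[Rr θ] (Fin 3 → Rr θ) :=
  LinearMap.pi (fun j => rmul1 θ (c j))

example (M : Fin 3 → Fin 3 → Rr θ) (v : Fin 3 → Rr θ) (j : Fin 3) :
    dmat θ M v j = v 0 * M 0 j + v 1 * M 1 j + v 2 * M 2 j := rfl

example (c : Fin 3 → Rr θ) (r : Rr θ) (j : Fin 3) : drow θ c r j = r * c j := rfl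

example (a b c d e f g h i : Rr θ) (v : Fin 3 → Rr θ) :
    dmat θ ![![a,b,c],![d,e,f],![g,h,i]] v 1 = v 0 * b + v 1 * e + v 2 * h := rfl

example (a b c : Rr θ) (v : Fin 3 → Rr θ) :
    rcol θ ![a,b,c] v = v 0 * a + v 1 * b + v 2 * c := rfl

/-! ### The differentials -/

/-- `d₁ : R³ → R`. -/
noncomputable def d1map : (Fin 3 → Rr θ) →ₗ[Rr θ] Rr θ :=
  rcol θ ![ι θ Xa - 1, ι θ Xb - 1, Tt θ - 1]

/-- `d₂ : R³ → R³`. -/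
noncomputable def d2map (pA qA pB qB : MonoidAlgebra ℤ Nn) :
    (Fin 3 → Rr θ) →ₗ[Rr θ] (Fin 3 → Rr θ) :=
  dmat θ ![![ι θ Xb - 1, 1 - ι θ Xa, 0],
           ![Tt θ - ι θ pA, -(ι θ qA), 1 - ι θ (σS θ Xa)],
           ![-(ι θ pB), Tt θ - ι θ qB, 1 - ι θ (σS θ Xb)]]

/-- `d₃ : R → R³`. -/
noncomputable def d3map (pA qA pB qB : MonoidAlgebra ℤ Nn) :
    Rr θ →ₗ[Rr θ] (Fin 3 → Rr θ) :=
  drow θ ![ι θ (pA * qB - pB * qA) - Tt θ, ι θ (σS θ Xb) - 1, 1 - ι θ (σS θ Xa)]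

section Identities

variable {θ}
variable {pA qA pB qB : MonoidAlgebra ℤ Nn}

lemma hTX : Tt θ * ι θ Xa = ι θ (σS θ Xa) * Tt θ := T_mul_iota θ Xa

lemma hTY : Tt θ * ι θ Xb = ι θ (σS θ Xb) * Tt θ := T_mul_iota θ Xb

lemma hPQgen {s p q : MonoidAlgebra ℤ Nn} (h : s = p * (Xa - 1) + q * (Xb - 1)) :
    ι θ p * (ι θ Xa - 1) + ι θ q * (ι θ Xb - 1) = ι θ s := by
  have h3 := congrArg (ι θ) h
  simp only [map_add, map_mul, map_sub, map_one] at h3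
  exact h3.symm

lemma hPQA (hA : σS θ Xa - 1 = pA * (Xa - 1) + qA * (Xb - 1)) :
    ι θ pA * (ι θ Xa - 1) + ι θ qA * (ι θ Xb - 1) = ι θ (σS θ Xa) - 1 := by
  have h3 := hPQgen (θ := θ) hA
  rwa [map_sub, map_one] at h3

lemma hPQB (hB : σS θ Xb - 1 = pB * (Xa - 1) + qB * (Xb - 1)) :
    ι θ pB * (ι θ Xa - 1) + ι θ qB * (ι θ Xb - 1) = ι θ (σS θ Xb) - 1 := by
  have h3 := hPQgen (θ := θ) hB
  rwa [map_sub, map_one] at h3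

lemma identH1 :
    (ι θ Xb - 1) * (ι θ Xa - 1) + (1 - ι θ Xa) * (ι θ Xb - 1) + 0 * (Tt θ - 1) = 0 := by
  have hS : (Xb - 1) * (Xa - 1) + (1 - Xa) * (Xb - 1) = (0 : MonoidAlgebra ℤ Nn) := by ring
  have h3 := congrArg (ι θ) hS
  simp only [map_add, map_mul, map_sub, map_one, map_zero] at h3
  rw [zero_mul, add_zero]
  exact h3

lemma identH2 (hA : σS θ Xa - 1 = pA * (Xa - 1) + qA * (Xb - 1)) :
    (Tt θ - ι θ pA) * (ι θ Xa - 1) + (-(ι θ qA)) * (ι θ Xb - 1)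
      + (1 - ι θ (σS θ Xa)) * (Tt θ - 1) = 0 := by
  have key : (Tt θ - ι θ pA) * (ι θ Xa - 1) + (-(ι θ qA)) * (ι θ Xb - 1)
      + (1 - ι θ (σS θ Xa)) * (Tt θ - 1)
      = (Tt θ * ι θ Xa - ι θ (σS θ Xa) * Tt θ)
        - ((ι θ pA * (ι θ Xa - 1) + ι θ qA * (ι θ Xb - 1)) - (ι θ (σS θ Xa) - 1)) := by
    noncomm_ring
  rw [key, hTX, hPQA hA, sub_self, sub_self, sub_zero]

lemma identH3 (hB : σS θ Xb - 1 = pB * (Xa - 1) + qB * (Xb - 1)) :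
    (-(ι θ pB)) * (ι θ Xa - 1) + (Tt θ - ι θ qB) * (ι θ Xb - 1)
      + (1 - ι θ (σS θ Xb)) * (Tt θ - 1) = 0 := by
  have key : (-(ι θ pB)) * (ι θ Xa - 1) + (Tt θ - ι θ qB) * (ι θ Xb - 1)
      + (1 - ι θ (σS θ Xb)) * (Tt θ - 1)
      = (Tt θ * ι θ Xb - ι θ (σS θ Xb) * Tt θ)
        - ((ι θ pB * (ι θ Xa - 1) + ι θ qB * (ι θ Xb - 1)) - (ι θ (σS θ Xb) - 1)) := by
    noncomm_ring
  rw [key, hTY, hPQB hB, sub_self, sub_self, sub_zero]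

lemma identH4 (hA : σS θ Xa - 1 = pA * (Xa - 1) + qA * (Xb - 1))
    (hB : σS θ Xb - 1 = pB * (Xa - 1) + qB * (Xb - 1)) :
    (ι θ (pA * qB - pB * qA) - Tt θ) * (ι θ Xb - 1)
      + (ι θ (σS θ Xb) - 1) * (Tt θ - ι θ pA)
      + (1 - ι θ (σS θ Xa)) * (-(ι θ pB)) = 0 := by
  set e := pA * qB - pB * qA with he
  have hS : e * (Xb - 1) - (σS θ Xb - 1) * pA + (σS θ Xa - 1) * pB = 0 := by
    rw [he]
    linear_combination pB * hA - pA * hB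
  have h3 := congrArg (ι θ) hS
  simp only [map_add, map_mul, map_sub, map_one, map_zero] at h3
  have key : (ι θ e - Tt θ) * (ι θ Xb - 1)
      + (ι θ (σS θ Xb) - 1) * (Tt θ - ι θ pA)
      + (1 - ι θ (σS θ Xa)) * (-(ι θ pB))
      = (ι θ (σS θ Xb) * Tt θ - Tt θ * ι θ Xb)
        + (ι θ e * (ι θ Xb - 1)
            - (ι θ (σS θ Xb) - 1) * ι θ pA + (ι θ (σS θ Xa) - 1) * ι θ pB) := by
    noncomm_ring
  rw [key, hTY, sub_self, h3, add_zero]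

lemma identH5 (hA : σS θ Xa - 1 = pA * (Xa - 1) + qA * (Xb - 1))
    (hB : σS θ Xb - 1 = pB * (Xa - 1) + qB * (Xb - 1)) :
    (ι θ (pA * qB - pB * qA) - Tt θ) * (1 - ι θ Xa)
      + (ι θ (σS θ Xb) - 1) * (-(ι θ qA))
      + (1 - ι θ (σS θ Xa)) * (Tt θ - ι θ qB) = 0 := by
  set e := pA * qB - pB * qA with he
  have hS : e * (Xa - 1) - (σS θ Xa - 1) * qB + (σS θ Xb - 1) * qA = 0 := by
    rw [he]
    linear_combination qA * hB - qB * hA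
  have h3 := congrArg (ι θ) hS
  simp only [map_add, map_mul, map_sub, map_one, map_zero] at h3
  have key : (ι θ e - Tt θ) * (1 - ι θ Xa)
      + (ι θ (σS θ Xb) - 1) * (-(ι θ qA))
      + (1 - ι θ (σS θ Xa)) * (Tt θ - ι θ qB)
      = (Tt θ * ι θ Xa - ι θ (σS θ Xa) * Tt θ)
        - (ι θ e * (ι θ Xa - 1)
            - (ι θ (σS θ Xa) - 1) * ι θ qB + (ι θ (σS θ Xb) - 1) * ι θ qA) := by
    noncomm_ring
  rw [key, hTX, sub_self, h3, sub_zero]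

lemma identH6 :
    (ι θ (pA * qB - pB * qA) - Tt θ) * 0
      + (ι θ (σS θ Xb) - 1) * (1 - ι θ (σS θ Xa))
      + (1 - ι θ (σS θ Xa)) * (1 - ι θ (σS θ Xb)) = 0 := by
  have hS : (σS θ Xb - 1) * (1 - σS θ Xa) + (1 - σS θ Xa) * (1 - σS θ Xb)
      = (0 : MonoidAlgebra ℤ Nn) := by ring
  have h3 := congrArg (ι θ) hS
  simp only [map_add, map_mul, map_sub, map_one, map_zero] at h3
  rw [mul_zero, zero_add]
  exact h3

end Identities

section Exactness

variable {θ}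
variable {pA qA pB qB : MonoidAlgebra ℤ Nn}

lemma d1_comp_d2 (hA : σS θ Xa - 1 = pA * (Xa - 1) + qA * (Xb - 1))
    (hB : σS θ Xb - 1 = pB * (Xa - 1) + qB * (Xb - 1)) (v : Fin 3 → Rr θ) :
    d1map θ (d2map θ pA qA pB qB v) = 0 := by
  have key : d1map θ (d2map θ pA qA pB qB v)
      = v 0 * ((ι θ Xb - 1) * (ι θ Xa - 1) + (1 - ι θ Xa) * (ι θ Xb - 1) + 0 * (Tt θ - 1))
        + v 1 * ((Tt θ - ι θ pA) * (ι θ Xa - 1) + (-(ι θ qA)) * (ι θ Xb - 1)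
            + (1 - ι θ (σS θ Xa)) * (Tt θ - 1))
        + v 2 * ((-(ι θ pB)) * (ι θ Xa - 1) + (Tt θ - ι θ qB) * (ι θ Xb - 1)
            + (1 - ι θ (σS θ Xb)) * (Tt θ - 1)) := by
    show (v 0 * (ι θ Xb - 1) + v 1 * (Tt θ - ι θ pA) + v 2 * (-(ι θ pB))) * (ι θ Xa - 1)
        + (v 0 * (1 - ι θ Xa) + v 1 * (-(ι θ qA)) + v 2 * (Tt θ - ι θ qB)) * (ι θ Xb - 1)
        + (v 0 * 0 + v 1 * (1 - ι θ (σS θ Xa)) + v 2 * (1 - ι θ (σS θ Xb))) * (Tt θ - 1) = _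
    noncomm_ring
  rw [key, identH1, identH2 hA, identH3 hB, mul_zero, mul_zero, mul_zero, add_zero, add_zero]

lemma d2_comp_d3 (hA : σS θ Xa - 1 = pA * (Xa - 1) + qA * (Xb - 1))
    (hB : σS θ Xb - 1 = pB * (Xa - 1) + qB * (Xb - 1)) (r : Rr θ) :
    d2map θ pA qA pB qB (d3map θ pA qA pB qB r) = 0 := by
  funext j
  fin_cases j
  · show (r * (ι θ (pA * qB - pB * qA) - Tt θ)) * (ι θ Xb - 1)
        + (r * (ι θ (σS θ Xb) - 1)) * (Tt θ - ι θ pA)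
        + (r * (1 - ι θ (σS θ Xa))) * (-(ι θ pB)) = 0
    have key : (r * (ι θ (pA * qB - pB * qA) - Tt θ)) * (ι θ Xb - 1)
        + (r * (ι θ (σS θ Xb) - 1)) * (Tt θ - ι θ pA)
        + (r * (1 - ι θ (σS θ Xa))) * (-(ι θ pB))
        = r * ((ι θ (pA * qB - pB * qA) - Tt θ) * (ι θ Xb - 1)
            + (ι θ (σS θ Xb) - 1) * (Tt θ - ι θ pA)
            + (1 - ι θ (σS θ Xa)) * (-(ι θ pB))) := by noncomm_ring
    rw [key, identH4 hA hB, mul_zero]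
  · show (r * (ι θ (pA * qB - pB * qA) - Tt θ)) * (1 - ι θ Xa)
        + (r * (ι θ (σS θ Xb) - 1)) * (-(ι θ qA))
        + (r * (1 - ι θ (σS θ Xa))) * (Tt θ - ι θ qB) = 0
    have key : (r * (ι θ (pA * qB - pB * qA) - Tt θ)) * (1 - ι θ Xa)
        + (r * (ι θ (σS θ Xb) - 1)) * (-(ι θ qA))
        + (r * (1 - ι θ (σS θ Xa))) * (Tt θ - ι θ qB)
        = r * ((ι θ (pA * qB - pB * qA) - Tt θ) * (1 - ι θ Xa)
            + (ι θ (σS θ Xb) - 1) * (-(ι θ qA))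
            + (1 - ι θ (σS θ Xa)) * (Tt θ - ι θ qB)) := by noncomm_ring
    rw [key, identH5 hA hB, mul_zero]
  · show (r * (ι θ (pA * qB - pB * qA) - Tt θ)) * 0
        + (r * (ι θ (σS θ Xb) - 1)) * (1 - ι θ (σS θ Xa))
        + (r * (1 - ι θ (σS θ Xa))) * (1 - ι θ (σS θ Xb)) = 0
    have key : (r * (ι θ (pA * qB - pB * qA) - Tt θ)) * 0
        + (r * (ι θ (σS θ Xb) - 1)) * (1 - ι θ (σS θ Xa))
        + (r * (1 - ι θ (σS θ Xa))) * (1 - ι θ (σS θ Xb))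
        = r * ((ι θ (pA * qB - pB * qA) - Tt θ) * 0
            + (ι θ (σS θ Xb) - 1) * (1 - ι θ (σS θ Xa))
            + (1 - ι θ (σS θ Xa)) * (1 - ι θ (σS θ Xb))) := by noncomm_ring
    rw [key, identH6, mul_zero]

lemma d3_injective : Function.Injective (d3map θ pA qA pB qB) := by
  intro r1 r2 h
  rw [← sub_eq_zero]
  have h1 : d3map θ pA qA pB qB (r1 - r2) = 0 := by rw [map_sub, h, sub_self]
  have h2 : (r1 - r2) * (ι θ (pA * qB - pB * qA) - Tt θ) = 0 := congrFun h1 0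
  exact reg_right_T θ h2

lemma sigXb_sub_one_ne_zero : σS θ Xb - 1 ≠ 0 := by
  have h1 : σS θ Xb = of ℤ Nn (torusAut θ bN) := by
    rw [Xb, MonoidAlgebra.of_apply, sigmaS_single]
    rfl
  rw [h1]
  exact of_sub_one_ne_zero (fun h => bN_ne_one ((torusAut θ).injective (by rw [h, map_one])))

lemma range_d3_eq_ker_d2 (hA : σS θ Xa - 1 = pA * (Xa - 1) + qA * (Xb - 1))
    (hB : σS θ Xb - 1 = pB * (Xa - 1) + qB * (Xb - 1)) :
    LinearMap.range (d3map θ pA qA pB qB) = LinearMap.ker (d2map θ pA qA pB qB) := by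
  apply le_antisymm
  · rintro x ⟨r, rfl⟩
    exact LinearMap.mem_ker.mpr (d2_comp_d3 hA hB r)
  · intro v hv
    have hv' : d2map θ pA qA pB qB v = 0 := LinearMap.mem_ker.mp hv
    -- component 2 of the relation
    have hcomp : v 0 * 0 + v 1 * (1 - ι θ (σS θ Xa)) + v 2 * (1 - ι θ (σS θ Xb)) = 0 :=
      congrFun hv' 2
    have hι1 : ι θ (1 - σS θ Xa) = 1 - ι θ (σS θ Xa) := by rw [map_sub, map_one]
    have hι2 : ι θ (1 - σS θ Xb) = 1 - ι θ (σS θ Xb) := by rw [map_sub, map_one]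
    have hrw : v 1 * ι θ (1 - σS θ Xa) + v 2 * ι θ (1 - σS θ Xb) = 0 := by
      rw [hι1, hι2]
      rw [mul_zero, zero_add] at hcomp
      exact hcomp
    have h3 : ∀ k, cf θ k (v 1) * (σS θ Xa - 1) + cf θ k (v 2) * (σS θ Xb - 1) = 0 := by
      intro k
      have hk := congrArg (cf θ k) hrw
      rw [map_add, cf_mul_iota, cf_mul_iota, map_zero] at hk
      linear_combination -hk
    have hex : ∀ k, ∃ w, cf θ k (v 1) = w * (σS θ Xb - 1)
        ∧ cf θ k (v 2) = -(w * (σS θ Xa - 1)) := fun k => K3σ θ (h3 k)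
    set w : ℤ → MonoidAlgebra ℤ Nn := fun k => Classical.choose (hex k) with hwdef
    have hw1 : ∀ k, cf θ k (v 1) = w k * (σS θ Xb - 1) :=
      fun k => (Classical.choose_spec (hex k)).1
    have hw2 : ∀ k, cf θ k (v 2) = -(w k * (σS θ Xa - 1)) :=
      fun k => (Classical.choose_spec (hex k)).2
    have hwsupp : ∀ k ∉ Fsupp θ (v 1), w k = 0 := by
      intro k hk
      have h0 : w k * (σS θ Xb - 1) = 0 := by rw [← hw1 k, cf_eq_zero_of_not_mem θ hk]
      rcases mul_eq_zero.mp h0 with h | h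
      · exact h
      · exact absurd h sigXb_sub_one_ne_zero
    set W := asm θ (Fsupp θ (v 1)) w with hWdef
    have hcfW : ∀ j, cf θ j W = w j := cf_asm' θ hwsupp
    have claim1 : v 1 = W * (ι θ (σS θ Xb) - 1) := by
      have h4 : ∀ k, cf θ k (v 1 - W * ι θ (σS θ Xb - 1)) = 0 := by
        intro k
        rw [map_sub, cf_mul_iota, hcfW, hw1 k, sub_self]
      have h5 := eq_zero_of_cf θ _ h4
      rw [sub_eq_zero] at h5
      rw [h5, map_sub, map_one]
    have claim2 : v 2 = W * (1 - ι θ (σS θ Xa)) := by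
      have h4 : ∀ k, cf θ k (v 2 - W * ι θ (1 - σS θ Xa)) = 0 := by
        intro k
        rw [map_sub, cf_mul_iota, hcfW, hw2 k]
        ring
      have h5 := eq_zero_of_cf θ _ h4
      rw [sub_eq_zero] at h5
      rw [h5, hι1]
    have h0comp : v 0 * (ι θ Xb - 1) + v 1 * (Tt θ - ι θ pA) + v 2 * (-(ι θ pB)) = 0 :=
      congrFun hv' 0
    have hkey : (v 0 - W * (ι θ (pA * qB - pB * qA) - Tt θ)) * (ι θ Xb - 1)
        = (v 0 * (ι θ Xb - 1) + (W * (ι θ (σS θ Xb) - 1)) * (Tt θ - ι θ pA)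
            + (W * (1 - ι θ (σS θ Xa))) * (-(ι θ pB)))
          - W * ((ι θ (pA * qB - pB * qA) - Tt θ) * (ι θ Xb - 1)
              + (ι θ (σS θ Xb) - 1) * (Tt θ - ι θ pA)
              + (1 - ι θ (σS θ Xa)) * (-(ι θ pB))) := by noncomm_ring
    rw [← claim1, ← claim2, h0comp, identH4 hA hB, mul_zero, sub_zero] at hkey
    have hreg : (v 0 - W * (ι θ (pA * qB - pB * qA) - Tt θ)) * ι θ (Xb - 1) = 0 := by
      have e2 : ι θ (Xb - 1) = ι θ Xb - 1 := by rw [map_sub, map_one]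
      rw [e2]
      exact hkey
    have claim0 : v 0 = W * (ι θ (pA * qB - pB * qA) - Tt θ) := by
      have h6 := reg_right θ Xb_sub_one_ne_zero hreg
      rw [sub_eq_zero] at h6
      exact h6
    refine LinearMap.mem_range.mpr ⟨W, ?_⟩
    funext j
    fin_cases j
    · exact claim0.symm
    · exact claim1.symm
    · exact claim2.symm

lemma aug_Xa_sub_one : augmentation Nn (Xa - 1) = 0 := by
  rw [map_sub, map_one, Xa, MonoidAlgebra.of_apply, aug_single, sub_self]

lemma aug_Xb_sub_one : augmentation Nn (Xb - 1) = 0 := by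
  rw [map_sub, map_one, Xb, MonoidAlgebra.of_apply, aug_single, sub_self]

lemma range_d2_eq_ker_d1 (hA : σS θ Xa - 1 = pA * (Xa - 1) + qA * (Xb - 1))
    (hB : σS θ Xb - 1 = pB * (Xa - 1) + qB * (Xb - 1)) :
    LinearMap.range (d2map θ pA qA pB qB) = LinearMap.ker (d1map θ) := by
  have e1 : ι θ (Xa - 1) = ι θ Xa - 1 := by rw [map_sub, map_one]
  have e2 : ι θ (Xb - 1) = ι θ Xb - 1 := by rw [map_sub, map_one]
  have hι1 : ι θ (1 - σS θ Xa) = 1 - ι θ (σS θ Xa) := by rw [map_sub, map_one]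
  have hι2 : ι θ (1 - σS θ Xb) = 1 - ι θ (σS θ Xb) := by rw [map_sub, map_one]
  apply le_antisymm
  · rintro x ⟨u, rfl⟩
    exact LinearMap.mem_ker.mpr (d1_comp_d2 hA hB u)
  · intro v hv
    have hvr : v 0 * (ι θ Xa - 1) + v 1 * (ι θ Xb - 1) + v 2 * (Tt θ - 1) = 0 :=
      LinearMap.mem_ker.mp hv
    have hvι : v 0 * ι θ (Xa - 1) + v 1 * ι θ (Xb - 1) + (v 2 * Tt θ - v 2) = 0 := by
      rw [e1, e2, ← mul_sub_one]
      exact hvr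
    -- Step A : all coefficients of `v 2` are in the augmentation ideal of `ℤ[ℤ²]`
    have hstep : ∀ k : ℤ, augmentation Nn (cf θ k (v 2))
        = augmentation Nn (cf θ (k-1) (v 2)) := by
      intro k
      have h5 := congrArg (cf θ k) hvι
      rw [map_zero, map_add, map_add, cf_mul_iota, cf_mul_iota, map_sub, cf_mul_T] at h5
      have h6 := congrArg (augmentation Nn) h5
      rw [map_zero, map_add, map_add, map_sub, map_mul, map_mul, aug_sigmainvS,
        aug_Xa_sub_one, mul_zero, aug_Xb_sub_one, mul_zero, zero_add, zero_add] at h6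
      rw [sub_eq_zero] at h6
      exact h6.symm
    have fzero : ∀ k, augmentation Nn (cf θ k (v 2)) = 0 :=
      const_fin_zero _ (Fsupp θ (v 2))
        (fun k hk => by rw [cf_eq_zero_of_not_mem θ hk, map_zero]) hstep
    -- Step B : kill the third component
    have hex : ∀ k, ∃ pq : MonoidAlgebra ℤ Nn × MonoidAlgebra ℤ Nn,
        cf θ k (v 2) = pq.1 * (σS θ Xa - 1) + pq.2 * (σS θ Xb - 1)
          ∧ (cf θ k (v 2) = 0 → pq = 0) := by
      intro k
      by_cases hk : cf θ k (v 2) = 0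
      · exact ⟨(0, 0), by simp [hk], fun _ => rfl⟩
      · obtain ⟨p, q, hpq⟩ := K2σ θ (fzero k)
        exact ⟨(p, q), hpq, fun h0 => absurd h0 hk⟩
    set pq : ℤ → MonoidAlgebra ℤ Nn × MonoidAlgebra ℤ Nn :=
      fun k => Classical.choose (hex k) with hpqdef
    have hpq1 : ∀ k, cf θ k (v 2) = (pq k).1 * (σS θ Xa - 1) + (pq k).2 * (σS θ Xb - 1) :=
      fun k => (Classical.choose_spec (hex k)).1
    have hpq0 : ∀ k, cf θ k (v 2) = 0 → pq k = 0 :=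
      fun k => (Classical.choose_spec (hex k)).2
    set C1 := asm θ (Fsupp θ (v 2)) (fun k => (pq k).1) with hC1def
    set C2 := asm θ (Fsupp θ (v 2)) (fun k => (pq k).2) with hC2def
    have hcfC1 : ∀ j, cf θ j C1 = (pq j).1 := cf_asm' θ (fun k hk => by
      rw [hpq0 k (cf_eq_zero_of_not_mem θ hk)]; rfl)
    have hcfC2 : ∀ j, cf θ j C2 = (pq j).2 := cf_asm' θ (fun k hk => by
      rw [hpq0 k (cf_eq_zero_of_not_mem θ hk)]; rfl)
    set u : Fin 3 → Rr θ := ![0, -C1, -C2] with hudef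
    have hu2 : d2map θ pA qA pB qB u 2 = v 2 := by
      show (0 : Rr θ) * 0 + (-C1) * (1 - ι θ (σS θ Xa)) + (-C2) * (1 - ι θ (σS θ Xb)) = v 2
      have hLHS : (0 : Rr θ) * 0 + (-C1) * (1 - ι θ (σS θ Xa)) + (-C2) * (1 - ι θ (σS θ Xb))
          = C1 * ι θ (σS θ Xa - 1) + C2 * ι θ (σS θ Xb - 1) := by
        rw [map_sub, map_one, map_sub, map_one]
        noncomm_ring
      rw [hLHS]
      have h7 : ∀ k, cf θ k (C1 * ι θ (σS θ Xa - 1) + C2 * ι θ (σS θ Xb - 1) - v 2) = 0 := by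
        intro k
        rw [map_sub, map_add, cf_mul_iota, cf_mul_iota, hcfC1, hcfC2, ← hpq1 k, sub_self]
      have h8 := eq_zero_of_cf θ _ h7
      rwa [sub_eq_zero] at h8
    set v' : Fin 3 → Rr θ := v - d2map θ pA qA pB qB u with hv'def
    have hv'2 : v' 2 = 0 := by
      rw [hv'def, Pi.sub_apply, hu2, sub_self]
    have hd1v' : d1map θ v' = 0 := by
      rw [hv'def, map_sub, LinearMap.mem_ker.mp hv, d1_comp_d2 hA hB, sub_self]
    have hraw' : v' 0 * ι θ (Xa - 1) + v' 1 * ι θ (Xb - 1) = 0 := by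
      have h9 : v' 0 * (ι θ Xa - 1) + v' 1 * (ι θ Xb - 1) + v' 2 * (Tt θ - 1) = 0 := hd1v'
      rw [hv'2, zero_mul, add_zero] at h9
      rw [e1, e2]
      exact h9
    have hcfk : ∀ k, cf θ k (v' 0) * (Xa - 1) + cf θ k (v' 1) * (Xb - 1) = 0 := by
      intro k
      have h10 := congrArg (cf θ k) hraw'
      rwa [map_zero, map_add, cf_mul_iota, cf_mul_iota] at h10
    have hex2 : ∀ k, ∃ w, cf θ k (v' 0) = w * (Xb - 1) ∧ cf θ k (v' 1) = -(w * (Xa - 1)) :=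
      fun k => K3 (hcfk k)
    set w : ℤ → MonoidAlgebra ℤ Nn := fun k => Classical.choose (hex2 k) with hwdef
    have hw1 : ∀ k, cf θ k (v' 0) = w k * (Xb - 1) :=
      fun k => (Classical.choose_spec (hex2 k)).1
    have hw2 : ∀ k, cf θ k (v' 1) = -(w k * (Xa - 1)) :=
      fun k => (Classical.choose_spec (hex2 k)).2
    have hwsupp : ∀ k ∉ Fsupp θ (v' 0), w k = 0 := by
      intro k hk
      have h0 : w k * (Xb - 1) = 0 := by rw [← hw1 k, cf_eq_zero_of_not_mem θ hk]
      rcases mul_eq_zero.mp h0 with h | h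
      · exact h
      · exact absurd h Xb_sub_one_ne_zero
    set W := asm θ (Fsupp θ (v' 0)) w with hWdef
    have hcfW : ∀ j, cf θ j W = w j := cf_asm' θ hwsupp
    have claim0 : v' 0 = W * (ι θ Xb - 1) := by
      have h4 : ∀ k, cf θ k (v' 0 - W * ι θ (Xb - 1)) = 0 := by
        intro k
        rw [map_sub, cf_mul_iota, hcfW, hw1 k, sub_self]
      have h5 := eq_zero_of_cf θ _ h4
      rw [sub_eq_zero] at h5
      rw [h5, e2]
    have claim1 : v' 1 = W * (1 - ι θ Xa) := by
      have h4 : ∀ k, cf θ k (v' 1 - W * ι θ (1 - Xa)) = 0 := by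
        intro k
        rw [map_sub, cf_mul_iota, hcfW, hw2 k]
        ring
      have h5 := eq_zero_of_cf θ _ h4
      rw [sub_eq_zero] at h5
      rw [h5]
      have hι3 : ι θ (1 - Xa) = 1 - ι θ Xa := by rw [map_sub, map_one]
      rw [hι3]
    refine LinearMap.mem_range.mpr ⟨u + ![W, 0, 0], ?_⟩
    rw [map_add]
    have hW3 : d2map θ pA qA pB qB ![W, 0, 0] = v' := by
      funext j
      fin_cases j
      · show W * (ι θ Xb - 1) + (0 : Rr θ) * (Tt θ - ι θ pA) + (0 : Rr θ) * (-(ι θ pB)) = v' 0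
        rw [zero_mul, zero_mul, add_zero, add_zero, ← claim0]
      · show W * (1 - ι θ Xa) + (0 : Rr θ) * (-(ι θ qA)) + (0 : Rr θ) * (Tt θ - ι θ qB) = v' 1
        rw [zero_mul, zero_mul, add_zero, add_zero, ← claim1]
      · show W * 0 + (0 : Rr θ) * (1 - ι θ (σS θ Xa)) + (0 : Rr θ) * (1 - ι θ (σS θ Xb)) = v' 2
        rw [mul_zero, zero_mul, zero_mul, add_zero, add_zero, hv'2]
    rw [hW3, hv'def]
    abel

lemma range_d1_eq_ker_aug :
    LinearMap.range (d1map θ) = RingHom.ker (augmentation (Gg θ)) := by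
  have e1 : ι θ (Xa - 1) = ι θ Xa - 1 := by rw [map_sub, map_one]
  have e2 : ι θ (Xb - 1) = ι θ Xb - 1 := by rw [map_sub, map_one]
  have ha : augmentation (Gg θ) (ι θ Xa) = 1 := by rw [Xa, iota_of, aug_of]
  have hb : augmentation (Gg θ) (ι θ Xb) = 1 := by rw [Xb, iota_of, aug_of]
  have ht : augmentation (Gg θ) (Tt θ) = 1 := by rw [Tt, Tk, aug_of]
  apply le_antisymm
  · rintro x ⟨v, rfl⟩
    refine RingHom.mem_ker.mpr ?_
    show augmentation (Gg θ)
      (v 0 * (ι θ Xa - 1) + v 1 * (ι θ Xb - 1) + v 2 * (Tt θ - 1)) = 0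
    simp [map_add, map_mul, map_sub, map_one, ha, hb, ht]
  · intro r hr
    have hr0 : augmentation (Gg θ) r = 0 := RingHom.mem_ker.mp hr
    obtain ⟨lam, hlam⟩ := laurent_ker (v := ρp θ r) (by rw [aug_comp_rho]; exact hr0)
    set r2 := ℓp θ lam with hr2def
    set r' := r - r2 * (Tt θ - 1) with hr'def
    have hpt : ∀ k : ℤ, Multiplicative.ofAdd k * (Multiplicative.ofAdd (1:ℤ))⁻¹
        = Multiplicative.ofAdd (k-1) := by
      intro k
      have : (k - 1 : ℤ) = k + (-1) := by ring
      rw [this, ofAdd_add, ofAdd_neg]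
    have hlamk : ∀ k : ℤ, augmentation Nn (cf θ k r)
        = lam.coeff (Multiplicative.ofAdd (k-1)) - lam.coeff (Multiplicative.ofAdd k) := by
      intro k
      rw [← rho_cf, hlam, mul_sub, mul_one, MonoidAlgebra.coeff_sub, Finsupp.sub_apply]
      congr 1
      rw [MonoidAlgebra.of_apply, MonoidAlgebra.mul_single_apply, mul_one, hpt]
    have haugr2 : ∀ k : ℤ, augmentation Nn (cf θ k r2) = lam.coeff (Multiplicative.ofAdd k) := by
      intro k
      rw [hr2def, cf_ellp, aug_single]
    have hsplitk : ∀ k, cf θ k (r2 * (Tt θ - 1)) = σinvS θ (cf θ (k-1) r2) - cf θ k r2 := by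
      intro k
      rw [mul_sub, mul_one, map_sub, cf_mul_T]
    have haug' : ∀ k, augmentation Nn (cf θ k r') = 0 := by
      intro k
      have hcf' : cf θ k r' = cf θ k r - (σinvS θ (cf θ (k-1) r2) - cf θ k r2) := by
        rw [hr'def, map_sub, hsplitk]
      rw [hcf', map_sub, map_sub, aug_sigmainvS, hlamk, haugr2, haugr2]
      ring
    have hex : ∀ k, ∃ pq : MonoidAlgebra ℤ Nn × MonoidAlgebra ℤ Nn,
        cf θ k r' = pq.1 * (Xa - 1) + pq.2 * (Xb - 1) ∧ (cf θ k r' = 0 → pq = 0) := by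
      intro k
      by_cases hk : cf θ k r' = 0
      · exact ⟨(0, 0), by simp [hk], fun _ => rfl⟩
      · obtain ⟨p, q, hpq⟩ := K2 (haug' k)
        exact ⟨(p, q), hpq, fun h0 => absurd h0 hk⟩
    set pq : ℤ → MonoidAlgebra ℤ Nn × MonoidAlgebra ℤ Nn :=
      fun k => Classical.choose (hex k) with hpqdef
    have hpq1 : ∀ k, cf θ k r' = (pq k).1 * (Xa - 1) + (pq k).2 * (Xb - 1) :=
      fun k => (Classical.choose_spec (hex k)).1
    have hpq0 : ∀ k, cf θ k r' = 0 → pq k = 0 :=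
      fun k => (Classical.choose_spec (hex k)).2
    set r0 := asm θ (Fsupp θ r') (fun k => (pq k).1) with hr0def
    set r1 := asm θ (Fsupp θ r') (fun k => (pq k).2) with hr1def
    have hcfr0 : ∀ j, cf θ j r0 = (pq j).1 := cf_asm' θ (fun k hk => by
      rw [hpq0 k (cf_eq_zero_of_not_mem θ hk)]; rfl)
    have hcfr1 : ∀ j, cf θ j r1 = (pq j).2 := cf_asm' θ (fun k hk => by
      rw [hpq0 k (cf_eq_zero_of_not_mem θ hk)]; rfl)
    refine ⟨![r0, r1, r2], ?_⟩
    show r0 * (ι θ Xa - 1) + r1 * (ι θ Xb - 1) + r2 * (Tt θ - 1) = r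
    rw [← e1, ← e2]
    have h7 : ∀ k, cf θ k (r0 * ι θ (Xa - 1) + r1 * ι θ (Xb - 1) + r2 * (Tt θ - 1) - r)
        = 0 := by
      intro k
      rw [map_sub, map_add, map_add, cf_mul_iota, cf_mul_iota, hsplitk, hcfr0, hcfr1]
      have hA1 : (pq k).1 * (Xa - 1) + (pq k).2 * (Xb - 1) = cf θ k r' := (hpq1 k).symm
      have hA2 : cf θ k r' = cf θ k r - (σinvS θ (cf θ (k-1) r2) - cf θ k r2) := by
        rw [hr'def, map_sub, hsplitk]
      linear_combination hA1 + hA2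
    have h8 := eq_zero_of_cf θ _ h7
    rwa [sub_eq_zero] at h8

end Exactness

/-- The main existence result, for the semidirect product group. -/
theorem main_res :
    ∃ (d₃ : Rr θ →ₗ[Rr θ] (Fin 3 → Rr θ))
      (d₂ : (Fin 3 → Rr θ) →ₗ[Rr θ] (Fin 3 → Rr θ))
      (d₁ : (Fin 3 → Rr θ) →ₗ[Rr θ] Rr θ),
      Function.Injective d₃ ∧
      LinearMap.range d₃ = LinearMap.ker d₂ ∧
      LinearMap.range d₂ = LinearMap.ker d₁ ∧
      LinearMap.range d₁ = RingHom.ker (augmentation (Gg θ)) ∧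
      Function.Surjective (augmentation (Gg θ)) := by
  classical
  have haugA : augmentation Nn (σS θ Xa - 1) = 0 := by
    rw [map_sub, map_one, Xa, MonoidAlgebra.of_apply, sigmaS_single, aug_single, sub_self]
  have haugB : augmentation Nn (σS θ Xb - 1) = 0 := by
    rw [map_sub, map_one, Xb, MonoidAlgebra.of_apply, sigmaS_single, aug_single, sub_self]
  obtain ⟨pA, qA, hA⟩ := K2 haugA
  obtain ⟨pB, qB, hB⟩ := K2 haugB
  exact ⟨d3map θ pA qA pB qB, d2map θ pA qA pB qB, d1map θ,
    d3_injective, range_d3_eq_ker_d2 hA hB, range_d2_eq_ker_d1 hA hB,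
    range_d1_eq_ker_aug (θ := θ), aug_surj⟩

end Glayer

end TorusRes

/-- The trivial module `ℤ` admits a free resolution
`0 → ℤ[G] → ℤ[G]³ → ℤ[G]³ → ℤ[G] → ℤ → 0` over `ℤ[G]`, whose final map is the
augmentation map. -/
theorem torusBundle_free_resolution (θ : GL (Fin 2) ℤ) :
    ∃ (d₃ : MonoidAlgebra ℤ (TorusBundleGroup θ) →ₗ[MonoidAlgebra ℤ (TorusBundleGroup θ)]
        (Fin 3 → MonoidAlgebra ℤ (TorusBundleGroup θ)))
      (d₂ : (Fin 3 → MonoidAlgebra ℤ (TorusBundleGroup θ))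
        →ₗ[MonoidAlgebra ℤ (TorusBundleGroup θ)]
        (Fin 3 → MonoidAlgebra ℤ (TorusBundleGroup θ)))
      (d₁ : (Fin 3 → MonoidAlgebra ℤ (TorusBundleGroup θ))
        →ₗ[MonoidAlgebra ℤ (TorusBundleGroup θ)]
        MonoidAlgebra ℤ (TorusBundleGroup θ)),
      Function.Injective d₃ ∧
      LinearMap.range d₃ = LinearMap.ker d₂ ∧
      LinearMap.range d₂ = LinearMap.ker d₁ ∧
      LinearMap.range d₁ = RingHom.ker (augmentation (TorusBundleGroup θ)) ∧
      Function.Surjective (augmentation (TorusBundleGroup θ)) :=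
  TorusRes.main_res θ
end

section
/- H¹(G, 𝔽₂) ≅ (𝔽₂)^{3 − r₂}, where r₂ is the rank over the field 𝔽₂ of the reduction modulo 2 of the integer matrix θ − I. -/
open Matrix SemidirectProduct

namespace TorusAux

variable (θ : GL (Fin 2) ℤ)

/-- `θ` reduced mod 2. -/
noncomputable def tbar : Matrix (Fin 2) (Fin 2) (ZMod 2) :=
  (θ : Matrix (Fin 2) (Fin 2) ℤ).map (Int.cast : ℤ → ZMod 2)

/-- `θ - 1` reduced mod 2. -/
noncomputable def mbar : Matrix (Fin 2) (Fin 2) (ZMod 2) :=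
  ((θ : Matrix (Fin 2) (Fin 2) ℤ) - 1).map (Int.cast : ℤ → ZMod 2)

lemma mbar_eq : mbar θ = tbar θ - 1 := by
  funext i j
  simp [mbar, tbar, Matrix.map_apply, Matrix.sub_apply, Matrix.one_apply, apply_ite
    (Int.cast : ℤ → ZMod 2)]

lemma torusAut_apply (x : Multiplicative (Fin 2 → ℤ)) :
    (torusAut θ x).toAdd = (θ : Matrix (Fin 2) (Fin 2) ℤ) *ᵥ x.toAdd := rfl

/-- casting an integer vector mod 2. -/
def cvec (x : Fin 2 → ℤ) : Fin 2 → ZMod 2 := fun j => ((x j : ZMod 2))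

lemma cvec_single (i : Fin 2) : cvec (Pi.single i 1) = Pi.single i 1 := by
  funext j
  simp [cvec, Pi.single_apply, apply_ite (Int.cast : ℤ → ZMod 2)]

lemma cvec_mulVec (x : Fin 2 → ℤ) :
    cvec ((θ : Matrix (Fin 2) (Fin 2) ℤ) *ᵥ x) = tbar θ *ᵥ cvec x := by
  funext j
  exact (Int.castRingHom (ZMod 2)).map_mulVec _ _ j

/-- Every `AddMonoidHom (Fin 2 → ℤ) →+ ZMod 2` is the dot product with the vector of its
values on the standard basis. -/
lemma addHom_eq_dot (F : (Fin 2 → ℤ) →+ ZMod 2) (x : Fin 2 → ℤ) :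
    F x = cvec x ⬝ᵥ (fun j => F (Pi.single j 1)) := by
  conv_lhs => rw [pi_eq_sum_univ x, map_sum]
  unfold dotProduct cvec
  refine Finset.sum_congr rfl fun j _ => ?_
  have h1 : (fun i => if j = i then (1 : ℤ) else 0) = Pi.single j 1 := by
    funext i
    rw [Pi.single_apply]
    exact if_congr eq_comm rfl rfl
  rw [show (x j • fun i => if j = i then (1:ℤ) else 0) = x j • Pi.single j (1:ℤ) by rw [h1],
    map_zsmul, zsmul_eq_mul]

/-- The additive hom `ℤ² → 𝔽₂` given by dotting the mod-2 reduction with `v`. -/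
noncomputable def gHom (v : Fin 2 → ZMod 2) : (Fin 2 → ℤ) →+ ZMod 2 where
  toFun x := cvec x ⬝ᵥ v
  map_zero' := by simp [cvec]
  map_add' x y := by
    have h : cvec (x + y) = cvec x + cvec y := by
      funext j; simp [cvec]
    show cvec (x + y) ⬝ᵥ v = cvec x ⬝ᵥ v + cvec y ⬝ᵥ v
    rw [h, add_dotProduct]

lemma gHom_single (v : Fin 2 → ZMod 2) (i : Fin 2) : gHom v (Pi.single i 1) = v i := by
  show cvec (Pi.single i 1) ⬝ᵥ v = v i
  rw [cvec_single, single_dotProduct, one_mul]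

lemma gHom_theta (v : Fin 2 → ZMod 2) (hv : (mbar θ)ᵀ *ᵥ v = 0) (x : Fin 2 → ℤ) :
    gHom v ((θ : Matrix (Fin 2) (Fin 2) ℤ) *ᵥ x) = gHom v x := by
  have hfix : (tbar θ)ᵀ *ᵥ v = v := by
    rw [mbar_eq, Matrix.transpose_sub, Matrix.sub_mulVec, Matrix.transpose_one,
      Matrix.one_mulVec, sub_eq_zero] at hv
    exact hv
  show cvec _ ⬝ᵥ v = cvec x ⬝ᵥ v
  rw [cvec_mulVec, dotProduct_comm, dotProduct_mulVec, ← mulVec_transpose, hfix,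
    dotProduct_comm]

/-- Invariance of a hom under an automorphism extends to all integer powers. -/
lemma hom_zpow_invariant {N C : Type*} [Group N] [CommGroup C] (f : N →* C) (e : MulAut N)
    (hfe : ∀ x, f (e x) = f x) : ∀ (z : ℤ) (x : N), f ((e ^ z) x) = f x := by
  have hinv : ∀ x, f (e⁻¹ x) = f x := fun x => by
    conv_rhs => rw [show x = e (e⁻¹ x) by simp, hfe]
  intro z
  induction z using Int.induction_on with
  | zero => simp
  | succ n ih =>
      intro x
      rw [_root_.zpow_add_one, MulAut.mul_apply, ih, hfe]
  | pred n ih =>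
      intro x
      rw [_root_.zpow_sub_one, MulAut.mul_apply, ih, hinv]

/-- The hom `G → 𝔽₂` (multiplicatively) built from invariant data `(v, b)`. -/
noncomputable def phiHom (v : Fin 2 → ZMod 2) (hv : (mbar θ)ᵀ *ᵥ v = 0) (b : ZMod 2) :
    (SemidirectProduct (Multiplicative (Fin 2 → ℤ)) (Multiplicative ℤ) (torusAction θ)) →*
      Multiplicative (ZMod 2) :=
  SemidirectProduct.lift
    (AddMonoidHom.toMultiplicative (gHom v))
    (zpowersHom _ (Multiplicative.ofAdd b))
    (by
      have h1 : ∀ y : Multiplicative (Fin 2 → ℤ),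
          (AddMonoidHom.toMultiplicative (gHom v)) (torusAut θ y)
            = (AddMonoidHom.toMultiplicative (gHom v)) y := by
        intro y
        show Multiplicative.ofAdd (gHom v (torusAut θ y).toAdd)
          = Multiplicative.ofAdd (gHom v y.toAdd)
        rw [torusAut_apply, gHom_theta θ v hv]
      intro h
      refine MonoidHom.ext fun x => ?_
      have key := hom_zpow_invariant (AddMonoidHom.toMultiplicative (gHom v)) (torusAut θ) h1
        h.toAdd x
      simp only [MonoidHom.comp_apply, MulEquiv.coe_toMonoidHom, MulAut.conj_apply]
      rw [show (torusAction θ) h = torusAut θ ^ h.toAdd by simp [torusAction], key, mul_comm,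
        inv_mul_cancel_left])

end TorusAux

namespace TorusAuxB
open TorusAux

variable (θ : GL (Fin 2) ℤ)

/-- Abbreviation for the semidirect product underlying `TorusBundleGroup`. -/
abbrev SDP (θ : GL (Fin 2) ℤ) : Type :=
  SemidirectProduct (Multiplicative (Fin 2 → ℤ)) (Multiplicative ℤ) (torusAction θ)

lemma addHom_conj {Gp : Type*} [Group Gp] (F : Additive Gp →+ ZMod 2) (a b : Gp) :
    F (Additive.ofMul (a * b * a⁻¹)) = F (Additive.ofMul b) := by
  rw [ofMul_mul, ofMul_mul, ofMul_inv, map_add, map_add, map_neg]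
  abel

/-- Restriction of an additive hom on `G` to the fiber `ℤ²`. -/
noncomputable def restN (F : Additive (SDP θ) →+ ZMod 2) : (Fin 2 → ℤ) →+ ZMod 2 where
  toFun x := F (Additive.ofMul (inl (Multiplicative.ofAdd x)))
  map_zero' := by
    show F (Additive.ofMul (inl (Multiplicative.ofAdd (0 : Fin 2 → ℤ)))) = 0
    have h : (inl (Multiplicative.ofAdd (0 : Fin 2 → ℤ)) : SDP θ) = 1 := by
      rw [show Multiplicative.ofAdd (0 : Fin 2 → ℤ) = 1 from rfl, _root_.map_one]
    rw [h]
    exact F.map_zero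
  map_add' x y := by
    show F (Additive.ofMul (inl (Multiplicative.ofAdd (x + y)))) = _
    have h : (inl (Multiplicative.ofAdd (x + y)) : SDP θ)
        = inl (Multiplicative.ofAdd x) * inl (Multiplicative.ofAdd y) := by
      rw [← _root_.map_mul]; rfl
    rw [h, ofMul_mul]
    exact F.map_add _ _

/-- Restriction of an additive hom on `G` to the base `ℤ`. -/
noncomputable def restH (F : Additive (SDP θ) →+ ZMod 2) : ℤ →+ ZMod 2 where
  toFun z := F (Additive.ofMul (inr (Multiplicative.ofAdd z)))
  map_zero' := by
    show F (Additive.ofMul (inr (Multiplicative.ofAdd (0 : ℤ)))) = 0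
    have h : (inr (Multiplicative.ofAdd (0 : ℤ)) : SDP θ) = 1 := by
      rw [show Multiplicative.ofAdd (0 : ℤ) = 1 from rfl, _root_.map_one]
    rw [h]
    exact F.map_zero
  map_add' x y := by
    show F (Additive.ofMul (inr (Multiplicative.ofAdd (x + y)))) = _
    have h : (inr (Multiplicative.ofAdd (x + y)) : SDP θ)
        = inr (Multiplicative.ofAdd x) * inr (Multiplicative.ofAdd y) := by
      rw [← _root_.map_mul]; rfl
    rw [h, ofMul_mul]
    exact F.map_add _ _

lemma restN_theta (F : Additive (SDP θ) →+ ZMod 2) (x : Fin 2 → ℤ) :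
    restN θ F ((θ : Matrix (Fin 2) (Fin 2) ℤ) *ᵥ x) = restN θ F x := by
  have h1 : (inl (Multiplicative.ofAdd ((θ : Matrix (Fin 2) (Fin 2) ℤ) *ᵥ x)) : SDP θ)
      = inr (Multiplicative.ofAdd (1 : ℤ)) * inl (Multiplicative.ofAdd x)
        * inr ((Multiplicative.ofAdd (1 : ℤ))⁻¹) := by
    rw [← SemidirectProduct.inl_aut]
    congr 1
  show F (Additive.ofMul (inl (Multiplicative.ofAdd (_ *ᵥ x)))) = _
  rw [h1, _root_.map_inv, addHom_conj]
  rfl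

lemma restN_mem_ker (F : Additive (SDP θ) →+ ZMod 2) :
    (mbar θ)ᵀ *ᵥ (fun i => restN θ F (Pi.single i 1)) = 0 := by
  set v := fun i => restN θ F (Pi.single i 1) with hvdef
  have hfix : ∀ i, ((tbar θ)ᵀ *ᵥ v) i = v i := by
    intro i
    have h1 := restN_theta θ F (Pi.single i 1)
    rw [addHom_eq_dot (restN θ F), addHom_eq_dot (restN θ F) (Pi.single i 1)] at h1
    rw [cvec_mulVec, cvec_single, dotProduct_comm, dotProduct_mulVec, ← mulVec_transpose,
      single_dotProduct, dotProduct_single] at h1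
    simpa using h1
  funext i
  have h2 : ((mbar θ)ᵀ *ᵥ v) i = ((tbar θ)ᵀ *ᵥ v) i - v i := by
    rw [mbar_eq, Matrix.transpose_sub, Matrix.sub_mulVec, Matrix.transpose_one,
      Matrix.one_mulVec]
    rfl
  rw [h2, hfix, sub_self]
  rfl

/-- The main computation: additive homs from `G` to `𝔽₂` are pairs `(v, b)` with
`v` in the kernel of `(θ̄ − 1)ᵀ`. -/
noncomputable def bigEquiv :
    (Additive (SDP θ) →+ ZMod 2)
      ≃+ (LinearMap.ker (Matrix.mulVecLin (mbar θ)ᵀ) × ZMod 2) where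
  toFun F := (⟨fun i => restN θ F (Pi.single i 1),
      LinearMap.mem_ker.2 (restN_mem_ker θ F)⟩, restH θ F 1)
  invFun p := MonoidHom.toAdditiveLeft (phiHom θ p.1.1 (LinearMap.mem_ker.1 p.1.2) p.2)
  map_add' F F' := by
    refine Prod.ext (Subtype.ext (funext fun i => rfl)) rfl
  left_inv F := by
    refine AddMonoidHom.ext fun x => ?_
    have hx : x.toMul = inl x.toMul.left * inr x.toMul.right :=
      SemidirectProduct.mk_eq_inl_mul_inr _ _
    have key : ((phiHom θ (fun i => restN θ F (Pi.single i 1))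
        (restN_mem_ker θ F) (restH θ F 1)) x.toMul).toAdd
          = F (Additive.ofMul x.toMul) := by
      rw [hx, _root_.map_mul]
      simp only [phiHom]
      rw [SemidirectProduct.lift_inl, SemidirectProduct.lift_inr,
        toAdd_mul, ofMul_mul, map_add]
      congr 1
      · show gHom (fun i => restN θ F (Pi.single i 1)) x.toMul.left.toAdd
            = restN θ F x.toMul.left.toAdd
        rw [addHom_eq_dot (restN θ F)]
        rfl
      · show ((Multiplicative.ofAdd (restH θ F 1)) ^ (x.toMul.right.toAdd)).toAdd
          = restH θ F x.toMul.right.toAdd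
        rw [toAdd_zpow, toAdd_ofAdd, ← map_zsmul (restH θ F), smul_eq_mul, mul_one]
    exact key
  right_inv p := by
    refine Prod.ext (Subtype.ext (funext fun i => ?_)) ?_
    · have key : ((phiHom θ p.1.1 (LinearMap.mem_ker.1 p.1.2) p.2)
          (inl (Multiplicative.ofAdd (Pi.single i 1)))).toAdd = p.1.1 i := by
        simp only [phiHom]
        rw [SemidirectProduct.lift_inl]
        exact gHom_single _ _
      exact key
    · have key : ((phiHom θ p.1.1 (LinearMap.mem_ker.1 p.1.2) p.2)
          (inr (Multiplicative.ofAdd (1 : ℤ)))).toAdd = p.2 := by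
        simp only [phiHom]
        rw [SemidirectProduct.lift_inr]
        show ((Multiplicative.ofAdd p.2) ^ ((1 : ℤ))).toAdd = p.2
        rw [zpow_one, toAdd_ofAdd]
      exact key

end TorusAuxB

/-- `H¹(G, 𝔽₂) ≅ 𝔽₂^(3 - r₂)`, where `r₂` is the rank of `θ - I` reduced mod `2`. -/
theorem torusBundle_H1_mod2 (θ : GL (Fin 2) ℤ) (r₂ : ℕ)
    (hr : (((θ : Matrix (Fin 2) (Fin 2) ℤ) - 1).map (Int.cast : ℤ → ZMod 2)).rank = r₂) :
    Nonempty ((groupCohomology (Rep.trivial (ZMod 2) (TorusBundleGroup θ) (ZMod 2)) 1) ≃+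
      (Fin (3 - r₂) → ZMod 2)) := by
  have hrank : ((TorusAux.mbar θ)ᵀ).rank = r₂ := by
    rw [Matrix.rank_transpose]; exact hr
  have hle : r₂ ≤ 2 := by
    rw [← hrank]
    simpa using Matrix.rank_le_card_width ((TorusAux.mbar θ)ᵀ)
  have h2 : Module.finrank (ZMod 2)
      (LinearMap.range (Matrix.mulVecLin (TorusAux.mbar θ)ᵀ)) = r₂ := hrank
  have h1 := LinearMap.finrank_range_add_finrank_ker (Matrix.mulVecLin (TorusAux.mbar θ)ᵀ)
  rw [h2, Module.finrank_fintype_fun_eq_card, Fintype.card_fin] at h1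
  have hfr : Module.finrank (ZMod 2)
      ((LinearMap.ker (Matrix.mulVecLin (TorusAux.mbar θ)ᵀ)) × ZMod 2)
      = Module.finrank (ZMod 2) (Fin (3 - r₂) → ZMod 2) := by
    rw [Module.finrank_prod, Module.finrank_self, Module.finrank_fintype_fun_eq_card,
      Fintype.card_fin]
    omega
  exact ⟨(((groupCohomology.H1IsoOfIsTrivial
      (Rep.trivial (ZMod 2) (TorusBundleGroup θ) (ZMod 2))).toLinearEquiv.toAddEquiv).trans
      ((TorusAuxB.bigEquiv θ).trans (LinearEquiv.ofFinrankEq _ _ hfr).toAddEquiv))⟩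
end

section
/- Let p be an odd prime. Then H¹(G, 𝔽_p) ≅ (𝔽_p)^{3 − r_p}, where r_p is the rank over the field 𝔽_p of the reduction modulo p of the integer matrix θ − I. -/
section Aux

open Multiplicative SemidirectProduct

lemma torusAut_toAdd (θ : GL (Fin 2) ℤ) (m : Multiplicative (Fin 2 → ℤ)) :
    Multiplicative.toAdd (torusAut θ m) = (θ : Matrix (Fin 2) (Fin 2) ℤ).mulVec (toAdd m) := by
  show (LinearMap.GeneralLinearGroup.generalLinearEquiv ℤ (Fin 2 → ℤ)
      (Matrix.GeneralLinearGroup.toLin θ)) (toAdd m) = _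
  simp [Matrix.GeneralLinearGroup.toLin]

variable (θ : GL (Fin 2) ℤ) (p : ℕ) [Fact p.Prime]

/-- Value of a hom on generators of `ℤ²`. -/
noncomputable def wOf (f : Additive (TorusBundleGroup θ) →+ ZMod p) : Fin 2 → ZMod p :=
  fun i => f (Additive.ofMul
    ((SemidirectProduct.inl (Multiplicative.ofAdd (Pi.single i 1)) : TorusBundleGroup θ)))

noncomputable def cOf (f : Additive (TorusBundleGroup θ) →+ ZMod p) : ZMod p :=
  f (Additive.ofMul ((SemidirectProduct.inr (Multiplicative.ofAdd 1) : TorusBundleGroup θ)))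

lemma addhom_eq_sum (g : (Fin 2 → ℤ) →+ ZMod p) (v : Fin 2 → ℤ) :
    g v = ∑ i, (v i : ZMod p) * g (Pi.single i 1) := by
  have hv : v = ∑ i, v i • Pi.single i (1 : ℤ) := by
    funext j
    simp [Finset.sum_apply, Pi.single_apply]
  conv_lhs => rw [hv]
  rw [map_sum]
  refine Finset.sum_congr rfl fun i _ => ?_
  rw [map_zsmul, zsmul_eq_mul]

/-- the additive hom `ℤ² →+ ZMod p` obtained by restricting `f` along `inl`. -/
noncomputable def fNOf (f : Additive (TorusBundleGroup θ) →+ ZMod p) :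
    (Fin 2 → ℤ) →+ ZMod p where
  toFun v := f (Additive.ofMul ((SemidirectProduct.inl (Multiplicative.ofAdd v) :
    TorusBundleGroup θ)))
  map_zero' := by
    show f (Additive.ofMul ((SemidirectProduct.inl (Multiplicative.ofAdd (0 : Fin 2 → ℤ)) :
      TorusBundleGroup θ))) = 0
    have : (SemidirectProduct.inl (Multiplicative.ofAdd (0 : Fin 2 → ℤ)) :
        TorusBundleGroup θ) = 1 := by simp
    rw [this]; exact map_zero f
  map_add' a b := by
    have : (SemidirectProduct.inl (Multiplicative.ofAdd (a + b)) : TorusBundleGroup θ)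
        = SemidirectProduct.inl (Multiplicative.ofAdd a) *
          SemidirectProduct.inl (Multiplicative.ofAdd b) := by
      rw [← map_mul]; rfl
    show f (Additive.ofMul ((SemidirectProduct.inl (Multiplicative.ofAdd (a + b)) :
      TorusBundleGroup θ))) = _
    rw [this]
    exact map_add f _ _

lemma fN_apply (f : Additive (TorusBundleGroup θ) →+ ZMod p) (v : Fin 2 → ℤ) :
    f (Additive.ofMul ((SemidirectProduct.inl (Multiplicative.ofAdd v) :
      TorusBundleGroup θ))) = ∑ i, (v i : ZMod p) * wOf θ p f i := by
  exact addhom_eq_sum p (fNOf θ p f) v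

noncomputable def fZOf (f : Additive (TorusBundleGroup θ) →+ ZMod p) : ℤ →+ ZMod p where
  toFun k := f (Additive.ofMul ((SemidirectProduct.inr (Multiplicative.ofAdd k) :
    TorusBundleGroup θ)))
  map_zero' := by
    show f (Additive.ofMul ((SemidirectProduct.inr (Multiplicative.ofAdd (0 : ℤ)) :
      TorusBundleGroup θ))) = 0
    have : (SemidirectProduct.inr (Multiplicative.ofAdd (0 : ℤ)) :
        TorusBundleGroup θ) = 1 := by simp
    rw [this]; exact map_zero f
  map_add' a b := by
    have : (SemidirectProduct.inr (Multiplicative.ofAdd (a + b)) : TorusBundleGroup θ)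
        = SemidirectProduct.inr (Multiplicative.ofAdd a) *
          SemidirectProduct.inr (Multiplicative.ofAdd b) := by
      rw [← map_mul]; rfl
    show f (Additive.ofMul ((SemidirectProduct.inr (Multiplicative.ofAdd (a + b)) :
      TorusBundleGroup θ))) = _
    rw [this]
    exact map_add f _ _

lemma fZ_apply (f : Additive (TorusBundleGroup θ) →+ ZMod p) (k : ℤ) :
    f (Additive.ofMul ((SemidirectProduct.inr (Multiplicative.ofAdd k) :
      TorusBundleGroup θ))) = (k : ZMod p) * cOf θ p f := by
  have h1 : (k : ℤ) = k • (1 : ℤ) := by simp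
  have := map_zsmul (fZOf θ p f) (1 : ℤ) k
  calc f (Additive.ofMul ((SemidirectProduct.inr (Multiplicative.ofAdd k) :
      TorusBundleGroup θ))) = fZOf θ p f k := rfl
    _ = fZOf θ p f (k • (1 : ℤ)) := by rw [← h1]
    _ = k • fZOf θ p f 1 := map_zsmul _ _ _
    _ = (k : ZMod p) * cOf θ p f := by rw [zsmul_eq_mul]; rfl

lemma f_expand (f : Additive (TorusBundleGroup θ) →+ ZMod p) (g : TorusBundleGroup θ) :
    f (Additive.ofMul g) =
      (∑ i, ((Multiplicative.toAdd (SemidirectProduct.left g) i : ℤ) : ZMod p) * wOf θ p f i)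
        + ((Multiplicative.toAdd (SemidirectProduct.right g) : ℤ) : ZMod p) * cOf θ p f := by
  conv_lhs => rw [← SemidirectProduct.inl_left_mul_inr_right g]
  have hadd : f (Additive.ofMul (SemidirectProduct.inl g.left * SemidirectProduct.inr g.right))
      = f (Additive.ofMul ((SemidirectProduct.inl g.left : TorusBundleGroup θ)))
        + f (Additive.ofMul ((SemidirectProduct.inr g.right : TorusBundleGroup θ))) :=
    map_add f _ _
  refine hadd.trans ?_
  rw [show (SemidirectProduct.inl g.left : TorusBundleGroup θ)
      = SemidirectProduct.inl (Multiplicative.ofAdd (Multiplicative.toAdd g.left)) from rfl,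
    show (SemidirectProduct.inr g.right : TorusBundleGroup θ)
      = SemidirectProduct.inr (Multiplicative.ofAdd (Multiplicative.toAdd g.right)) from rfl,
    fN_apply, fZ_apply]

end Aux

section Aux2
open Multiplicative SemidirectProduct

variable (θ : GL (Fin 2) ℤ) (p : ℕ) [Fact p.Prime]

lemma torusAction_one : torusAction θ (Multiplicative.ofAdd 1) = torusAut θ := by
  show zpowersHom _ (torusAut θ) (Multiplicative.ofAdd 1) = _
  rw [zpowersHom_apply]
  simp

lemma f_inl_aut (f : Additive (TorusBundleGroup θ) →+ ZMod p)
    (n : Multiplicative (Fin 2 → ℤ)) :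
    f (Additive.ofMul ((SemidirectProduct.inl (torusAut θ n) : TorusBundleGroup θ))) =
      f (Additive.ofMul ((SemidirectProduct.inl n : TorusBundleGroup θ))) := by
  have h1 : (SemidirectProduct.inl (torusAut θ n) : TorusBundleGroup θ)
      = SemidirectProduct.inr (Multiplicative.ofAdd 1) * SemidirectProduct.inl n *
        SemidirectProduct.inr (Multiplicative.ofAdd 1)⁻¹ := by
    rw [← torusAction_one θ]
    exact SemidirectProduct.inl_aut _ _
  rw [h1]
  rw [show (SemidirectProduct.inr ((Multiplicative.ofAdd (1:ℤ))⁻¹) : TorusBundleGroup θ)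
      = (SemidirectProduct.inr (Multiplicative.ofAdd (1:ℤ)))⁻¹ from map_inv _ _]
  have key : ∀ a b : TorusBundleGroup θ, f (Additive.ofMul (a * b)) = f (Additive.ofMul a) + f (Additive.ofMul b) := fun a b => map_add f _ _
  have keyinv : ∀ a : TorusBundleGroup θ, f (Additive.ofMul a⁻¹) = - f (Additive.ofMul a) := fun a => map_neg f _
  erw [key, key, keyinv]
  ring

lemma wOf_mem (f : Additive (TorusBundleGroup θ) →+ ZMod p) (j : Fin 2) :
    ∑ i, (((θ : Matrix (Fin 2) (Fin 2) ℤ) i j : ℤ) : ZMod p) * wOf θ p f i = wOf θ p f j := by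
  have := f_inl_aut θ p f (Multiplicative.ofAdd (Pi.single j 1))
  have ha : torusAut θ (Multiplicative.ofAdd (Pi.single j 1))
      = Multiplicative.ofAdd ((θ : Matrix (Fin 2) (Fin 2) ℤ).mulVec (Pi.single j 1)) := by
    have := torusAut_toAdd θ (Multiplicative.ofAdd (Pi.single j 1))
    simpa using congrArg Multiplicative.ofAdd this
  rw [ha, fN_apply] at this
  simp [Matrix.mulVec_single] at this
  rw [Fin.sum_univ_two]
  exact this

section Aux3
open Multiplicative SemidirectProduct

variable (θ : GL (Fin 2) ℤ) (p : ℕ) [Fact p.Prime]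

/-- the linear functional on `ℤ²` given by a vector `w` over `ZMod p`. -/
def lwFun (w : Fin 2 → ZMod p) (v : Fin 2 → ℤ) : ZMod p := ∑ i, (v i : ZMod p) * w i

lemma lwFun_add (w : Fin 2 → ZMod p) (a b : Fin 2 → ℤ) :
    lwFun p w (a + b) = lwFun p w a + lwFun p w b := by
  simp [lwFun, add_mul, Finset.sum_add_distrib]

lemma lwFun_zero (w : Fin 2 → ZMod p) : lwFun p w 0 = 0 := by simp [lwFun]

lemma lwFun_single (w : Fin 2 → ZMod p) (i : Fin 2) : lwFun p w (Pi.single i 1) = w i := by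
  rw [lwFun, Finset.sum_eq_single i]
  · simp
  · intro b _ hb; simp [Pi.single_apply, hb]
  · simp

variable {θ p} in
lemma lwFun_mulVec {w : Fin 2 → ZMod p}
    (hw : ∀ j, ∑ i, (((θ : Matrix (Fin 2) (Fin 2) ℤ) i j : ℤ) : ZMod p) * w i = w j)
    (v : Fin 2 → ℤ) :
    lwFun p w ((θ : Matrix (Fin 2) (Fin 2) ℤ).mulVec v) = lwFun p w v := by
  unfold lwFun
  calc ∑ i, (((θ : Matrix (Fin 2) (Fin 2) ℤ).mulVec v i : ℤ) : ZMod p) * w i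
      = ∑ i, ∑ j, (((θ : Matrix (Fin 2) (Fin 2) ℤ) i j : ℤ) : ZMod p) * (v j : ZMod p) * w i := by
        refine Finset.sum_congr rfl fun i _ => ?_
        rw [show ((θ : Matrix (Fin 2) (Fin 2) ℤ).mulVec v i : ℤ)
            = ∑ j, (θ : Matrix (Fin 2) (Fin 2) ℤ) i j * v j from rfl]
        push_cast
        rw [Finset.sum_mul]
    _ = ∑ j, (v j : ZMod p) * ∑ i, (((θ : Matrix (Fin 2) (Fin 2) ℤ) i j : ℤ) : ZMod p) * w i := by
        rw [Finset.sum_comm]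
        refine Finset.sum_congr rfl fun j _ => ?_
        rw [Finset.mul_sum]
        refine Finset.sum_congr rfl fun i _ => ?_
        ring
    _ = ∑ j, (v j : ZMod p) * w j := by
        refine Finset.sum_congr rfl fun j _ => ?_
        rw [hw j]

variable {θ p} in
lemma lwFun_aut_pow {w : Fin 2 → ZMod p}
    (hw : ∀ j, ∑ i, (((θ : Matrix (Fin 2) (Fin 2) ℤ) i j : ℤ) : ZMod p) * w i = w j)
    (k : ℤ) (m : Multiplicative (Fin 2 → ℤ)) :
    lwFun p w (Multiplicative.toAdd ((torusAut θ ^ k) m)) = lwFun p w (Multiplicative.toAdd m) := by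
  have step : ∀ m, lwFun p w (Multiplicative.toAdd (torusAut θ m))
      = lwFun p w (Multiplicative.toAdd m) := fun m => by
    rw [torusAut_toAdd]; exact lwFun_mulVec hw _
  have stepinv : ∀ m, lwFun p w (Multiplicative.toAdd ((torusAut θ)⁻¹ m))
      = lwFun p w (Multiplicative.toAdd m) := fun m => by
    have := step ((torusAut θ)⁻¹ m)
    rw [MulAut.apply_inv_self] at this
    exact this.symm
  induction k using Int.induction_on generalizing m with
  | zero => simp
  | succ k ih =>
      rw [show ((k : ℤ) + 1) = (k + 1 : ℤ) from rfl, zpow_add_one, MulAut.mul_apply]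
      rw [ih]
      exact step m
  | pred k ih =>
      rw [show (-(k : ℤ) - 1 : ℤ) = (-(k : ℤ)) - 1 from rfl, zpow_sub_one, MulAut.mul_apply]
      rw [ih]
      exact stepinv m

variable {θ p} in
/-- The group hom `G →* Multiplicative (ZMod p)` built from an invariant vector `w` and `c`. -/
noncomputable def homOf {w : Fin 2 → ZMod p}
    (hw : ∀ j, ∑ i, (((θ : Matrix (Fin 2) (Fin 2) ℤ) i j : ℤ) : ZMod p) * w i = w j)
    (c : ZMod p) : TorusBundleGroup θ →* Multiplicative (ZMod p) where
  toFun g := Multiplicative.ofAdd (lwFun p w (Multiplicative.toAdd g.left)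
    + (Multiplicative.toAdd g.right : ℤ) * c)
  map_one' := by
    show Multiplicative.ofAdd (lwFun p w (Multiplicative.toAdd
      ((1 : TorusBundleGroup θ).left)) + _) = 1
    have h1 : (1 : TorusBundleGroup θ).left = 1 := rfl
    have h2 : (1 : TorusBundleGroup θ).right = 1 := rfl
    simp [lwFun, h1, h2]
  map_mul' a b := by
    show Multiplicative.ofAdd (lwFun p w (Multiplicative.toAdd ((a * b).left)) + _) = _
    have hl : Multiplicative.toAdd ((a * b : TorusBundleGroup θ).left)
        = Multiplicative.toAdd a.left
          + Multiplicative.toAdd ((torusAut θ ^ Multiplicative.toAdd a.right) b.left) := rfl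
    have hr : Multiplicative.toAdd ((a * b : TorusBundleGroup θ).right)
        = Multiplicative.toAdd a.right + Multiplicative.toAdd b.right := rfl
    rw [hl, hr, lwFun_add, lwFun_aut_pow hw, ← ofAdd_add]
    push_cast
    ring_nf

end Aux3

section Main
open Multiplicative SemidirectProduct
open scoped Matrix

variable (θ : GL (Fin 2) ℤ) (p : ℕ) [Fact p.Prime]

lemma mem_K_iff (w : Fin 2 → ZMod p) :
    ((((θ : Matrix (Fin 2) (Fin 2) ℤ) - 1).map (Int.cast : ℤ → ZMod p))ᵀ).mulVec w = 0
      ↔ ∀ j, ∑ i, (((θ : Matrix (Fin 2) (Fin 2) ℤ) i j : ℤ) : ZMod p) * w i = w j := by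
  have hM : ∀ j, (((((θ : Matrix (Fin 2) (Fin 2) ℤ) - 1).map
        (Int.cast : ℤ → ZMod p))ᵀ).mulVec w) j
      = (∑ i, (((θ : Matrix (Fin 2) (Fin 2) ℤ) i j : ℤ) : ZMod p) * w i) - w j := by
    intro j
    rw [show (((((θ : Matrix (Fin 2) (Fin 2) ℤ) - 1).map (Int.cast : ℤ → ZMod p))ᵀ).mulVec w) j
        = ∑ i, ((((θ : Matrix (Fin 2) (Fin 2) ℤ) - 1).map (Int.cast : ℤ → ZMod p)) i j) * w i
        from rfl]
    rw [show (∑ i, ((((θ : Matrix (Fin 2) (Fin 2) ℤ) - 1).map (Int.cast : ℤ → ZMod p)) i j) * w i)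
        = ∑ i, ((((θ : Matrix (Fin 2) (Fin 2) ℤ) i j : ℤ) : ZMod p)
            - if i = j then 1 else 0) * w i from by
      refine Finset.sum_congr rfl fun i _ => ?_
      congr 1
      simp [Matrix.map_apply, Matrix.sub_apply, Matrix.one_apply]]
    rw [Finset.sum_congr rfl (fun i _ => sub_mul _ _ _), Finset.sum_sub_distrib]
    congr 1
    simp [ite_mul]
  constructor
  · intro h j
    have := congrFun h j
    rw [hM j] at this
    have := sub_eq_zero.mp this
    exact this
  · intro h
    funext j
    rw [show (0 : Fin 2 → ZMod p) j = 0 from rfl, hM j, h j, sub_self]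

/-- The comparison linear map. -/
noncomputable def PhiMap :
    (Additive (TorusBundleGroup θ) →+ ZMod p) →ₗ[ZMod p]
      (LinearMap.ker ((((θ : Matrix (Fin 2) (Fin 2) ℤ) - 1).map
        (Int.cast : ℤ → ZMod p))ᵀ.mulVecLin) × ZMod p) where
  toFun f := (⟨wOf θ p f, by
    rw [LinearMap.mem_ker, Matrix.mulVecLin_apply, mem_K_iff]
    exact wOf_mem θ p f⟩, cOf θ p f)
  map_add' f g := by
    refine Prod.ext (Subtype.ext ?_) ?_
    · funext i
      rfl
    · rfl
  map_smul' r f := by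
    refine Prod.ext (Subtype.ext ?_) ?_
    · funext i
      rfl
    · rfl

lemma PhiMap_bijective : Function.Bijective (PhiMap θ p) := by
  constructor
  · rw [injective_iff_map_eq_zero]
    intro f hf
    have hw : wOf θ p f = 0 := congrArg (fun x => (x.1 : Fin 2 → ZMod p)) hf
    have hc : cOf θ p f = 0 := congrArg Prod.snd hf
    refine AddMonoidHom.ext fun a => ?_
    have := f_expand θ p f (Additive.toMul a)
    rw [show Additive.ofMul (Additive.toMul a) = a from rfl] at this
    rw [this, hw, hc]
    simp
  · rintro ⟨⟨w, hwK⟩, c⟩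
    rw [LinearMap.mem_ker, Matrix.mulVecLin_apply, mem_K_iff] at hwK
    refine ⟨MonoidHom.toAdditiveLeft (homOf hwK c), ?_⟩
    refine Prod.ext (Subtype.ext ?_) ?_
    · funext i
      show wOf θ p _ i = w i
      show Multiplicative.toAdd (homOf hwK c
        ((SemidirectProduct.inl (Multiplicative.ofAdd (Pi.single i 1)) :
          TorusBundleGroup θ))) = w i
      show lwFun p w (Multiplicative.toAdd ((SemidirectProduct.inl
          (Multiplicative.ofAdd (Pi.single i 1)) : TorusBundleGroup θ).left))
        + (Multiplicative.toAdd ((SemidirectProduct.inl (Multiplicative.ofAdd (Pi.single i 1)) :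
          TorusBundleGroup θ).right) : ℤ) * c = w i
      rw [SemidirectProduct.left_inl, SemidirectProduct.right_inl]
      simp [lwFun_single]
    · show cOf θ p _ = c
      show lwFun p w (Multiplicative.toAdd ((SemidirectProduct.inr
          (Multiplicative.ofAdd (1 : ℤ)) : TorusBundleGroup θ).left))
        + (Multiplicative.toAdd ((SemidirectProduct.inr (Multiplicative.ofAdd (1 : ℤ)) :
          TorusBundleGroup θ).right) : ℤ) * c = c
      rw [SemidirectProduct.left_inr, SemidirectProduct.right_inr]
      simp [lwFun_zero]

end Main

open scoped Matrix

/-- For an odd prime `p`, `H¹(G, 𝔽_p) ≅ 𝔽_p^(3 - r_p)`, where `r_p` is the rank of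
`θ - I` reduced mod `p`. -/
theorem torusBundle_H1_modp (θ : GL (Fin 2) ℤ) (p : ℕ) (hp : p.Prime) (hodd : Odd p)
    (r_p : ℕ) (hr : (((θ : Matrix (Fin 2) (Fin 2) ℤ) - 1).map (Int.cast : ℤ → ZMod p)).rank = r_p) :
    Nonempty ((groupCohomology (Rep.trivial (ZMod p) (TorusBundleGroup θ) (ZMod p)) 1) ≃+
      (Fin (3 - r_p) → ZMod p)) := by
  haveI := Fact.mk hp
  set M := ((θ : Matrix (Fin 2) (Fin 2) ℤ) - 1).map (Int.cast : ℤ → ZMod p) with hM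
  let e1 : (groupCohomology (Rep.trivial (ZMod p) (TorusBundleGroup θ) (ZMod p)) 1) ≃+
      (Additive (TorusBundleGroup θ) →+ ZMod p) :=
    (groupCohomology.H1IsoOfIsTrivial _).toLinearEquiv.toAddEquiv
  let e2 := LinearEquiv.ofBijective (PhiMap θ p) (PhiMap_bijective θ p)
  have hrk : (Mᵀ).rank = r_p := by rw [Matrix.rank_transpose]; exact hr
  have hsum := LinearMap.finrank_range_add_finrank_ker (Mᵀ.mulVecLin)
  rw [show Module.finrank (ZMod p) (LinearMap.range Mᵀ.mulVecLin) = (Mᵀ).rank from rfl,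
    hrk, Module.finrank_fintype_fun_eq_card, Fintype.card_fin] at hsum
  have hprod : Module.finrank (ZMod p)
      ((LinearMap.ker (Mᵀ.mulVecLin)) × ZMod p) = (2 - r_p) + 1 := by
    rw [Module.finrank_prod, Module.finrank_self]
    omega
  have htarget : Module.finrank (ZMod p) (Fin (3 - r_p) → ZMod p) = 3 - r_p := by
    rw [Module.finrank_fintype_fun_eq_card, Fintype.card_fin]
  have hne : Nonempty (((LinearMap.ker (Mᵀ.mulVecLin)) × ZMod p) ≃ₗ[ZMod p]
      (Fin (3 - r_p) → ZMod p)) :=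
    FiniteDimensional.nonempty_linearEquiv_of_finrank_eq (by rw [hprod, htarget]; omega)
  obtain ⟨e3⟩ := hne
  exact ⟨e1.trans ((e2.trans e3).toAddEquiv)⟩
end Aux2
end

section
/- Let θ = [[α, γ], [β, δ]] ∈ GL(2,ℤ) with det θ = 1, and suppose the integer matrix θ − I has rank 1. Then the cokernel of the map ℤ² → ℤ² given by θ − I is isomorphic to ℤ/gcd(β,γ) ⊕ ℤ. -/
/-- Cokernel of a 2×2 integer matrix whose columns are `s • v` and `t • v`
for a primitive vector `v = (v1, v2)` (witnessed by `p * v1 + q * v2 = 1`). -/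
theorem coker_helper (M : Matrix (Fin 2) (Fin 2) ℤ) (v1 v2 p q s t : ℤ)
    (hpq : p * v1 + q * v2 = 1)
    (h00 : M 0 0 = s * v1) (h10 : M 1 0 = s * v2)
    (h01 : M 0 1 = t * v1) (h11 : M 1 1 = t * v2) :
    Nonempty (((Fin 2 → ℤ) ⧸ LinearMap.range M.mulVecLin) ≃+
      (ZMod (Int.gcd s t) × ℤ)) := by
  set k : ℕ := Int.gcd s t with hk
  let f1 : (Fin 2 → ℤ) →ₗ[ℤ] ℤ := p • LinearMap.proj 0 + q • LinearMap.proj 1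
  let f2 : (Fin 2 → ℤ) →ₗ[ℤ] ℤ := v2 • LinearMap.proj 0 - v1 • LinearMap.proj 1
  let cc : ℤ →ₗ[ℤ] ZMod k := (Int.castRingHom (ZMod k)).toAddMonoidHom.toIntLinearMap
  let L : (Fin 2 → ℤ) →ₗ[ℤ] (ZMod k × ℤ) := (cc ∘ₗ f1).prod f2
  have hL : ∀ w : Fin 2 → ℤ,
      L w = (((p * w 0 + q * w 1 : ℤ) : ZMod k), v2 * w 0 - v1 * w 1) := by
    intro w
    simp [L, f1, f2, cc, LinearMap.prod_apply, smul_eq_mul]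
  have hmv : ∀ u : Fin 2 → ℤ, M.mulVec u =
      ![M 0 0 * u 0 + M 0 1 * u 1, M 1 0 * u 0 + M 1 1 * u 1] := by
    intro u
    funext i
    fin_cases i <;>
      simp [Matrix.mulVec, dotProduct, Fin.sum_univ_two]
  have hsurj : Function.Surjective L := by
    rintro ⟨y, z⟩
    obtain ⟨y0, rfl⟩ := ZMod.intCast_surjective y
    refine ⟨![v1 * y0 + q * z, v2 * y0 - p * z], ?_⟩
    rw [hL]
    have e1 : p * (v1 * y0 + q * z) + q * (v2 * y0 - p * z) = y0 := by
      linear_combination y0 * hpq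
    have e2 : v2 * (v1 * y0 + q * z) - v1 * (v2 * y0 - p * z) = z := by
      linear_combination z * hpq
    simp only [Matrix.cons_val_zero, Matrix.cons_val_one, Matrix.head_cons]
    rw [e1, e2]
  have hker : LinearMap.range M.mulVecLin = LinearMap.ker L := by
    apply le_antisymm
    · rintro _ ⟨u, rfl⟩
      rw [LinearMap.mem_ker, Matrix.mulVecLin_apply, hmv, hL]
      simp only [Matrix.cons_val_zero, Matrix.cons_val_one, Matrix.head_cons]
      rw [Prod.mk_eq_zero]
      constructor
      · have : p * (M 0 0 * u 0 + M 0 1 * u 1) + q * (M 1 0 * u 0 + M 1 1 * u 1)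
            = s * u 0 + t * u 1 := by
          rw [h00, h01, h10, h11]; linear_combination (s * u 0 + t * u 1) * hpq
        rw [this, ZMod.intCast_zmod_eq_zero_iff_dvd]
        exact dvd_add (Dvd.dvd.mul_right (Int.gcd_dvd_left _ _) _)
          (Dvd.dvd.mul_right (Int.gcd_dvd_right _ _) _)
      · rw [h00, h01, h10, h11]; ring
    · intro w hw
      rw [LinearMap.mem_ker, hL, Prod.mk_eq_zero] at hw
      obtain ⟨hw1, hw2⟩ := hw
      rw [ZMod.intCast_zmod_eq_zero_iff_dvd] at hw1
      obtain ⟨r, hr⟩ := hw1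
      refine ⟨![Int.gcdA s t * r, Int.gcdB s t * r], ?_⟩
      have hg : (k : ℤ) = s * Int.gcdA s t + t * Int.gcdB s t := Int.gcd_eq_gcd_ab s t
      rw [Matrix.mulVecLin_apply, hmv]
      funext i
      fin_cases i <;>
        simp only [Matrix.cons_val_zero, Matrix.cons_val_one, Matrix.head_cons,
          Fin.isValue, Fin.zero_eta, Fin.mk_one]
      · rw [h00, h01]
        linear_combination (-(v1 * r)) * hg + (-v1) * hr + (-q) * hw2 + (w 0) * hpq
      · rw [h10, h11]
        linear_combination (-(v2 * r)) * hg + (-v2) * hr + p * hw2 + (w 1) * hpq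
  exact ⟨((Submodule.quotEquivOfEq _ _ hker).trans
    (L.quotKerEquivOfSurjective hsurj)).toAddEquiv⟩

/-- If `θ ∈ GL(2, ℤ)` has `det θ = 1` and `θ - I` has rank `1`, then
`ℤ² / (θ - I)ℤ² ≅ ℤ/gcd(β, γ) ⊕ ℤ`, where `β = θ 1 0` and `γ = θ 0 1`. -/
theorem coker_rank1_detOne (θ : Matrix (Fin 2) (Fin 2) ℤ)
    (hdet : θ.det = 1) (hr : (θ - 1).rank = 1) :
    Nonempty (((Fin 2 → ℤ) ⧸ LinearMap.range (θ - 1).mulVecLin) ≃+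
      (ZMod (Int.gcd (θ 1 0) (θ 0 1)) × ℤ)) := by
  have hM00 : (θ - 1) 0 0 = θ 0 0 - 1 := by simp [Matrix.sub_apply, Matrix.one_apply]
  have hM01 : (θ - 1) 0 1 = θ 0 1 := by simp [Matrix.sub_apply, Matrix.one_apply]
  have hM10 : (θ - 1) 1 0 = θ 1 0 := by simp [Matrix.sub_apply, Matrix.one_apply]
  have hM11 : (θ - 1) 1 1 = θ 1 1 - 1 := by simp [Matrix.sub_apply, Matrix.one_apply]
  rw [Matrix.det_fin_two] at hdet
  -- the determinant of θ - 1 vanishes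
  have hdM : (θ - 1).det = 0 := by
    by_contra h
    have hinj : Function.Injective (θ - 1).mulVecLin := by
      rw [← LinearMap.ker_eq_bot, Matrix.ker_mulVecLin_eq_bot_iff]
      intro v hv
      exact Matrix.eq_zero_of_mulVec_eq_zero h hv
    have h2 : (θ - 1).rank = 2 := by
      rw [Matrix.rank, ← (LinearEquiv.ofInjective _ hinj).finrank_eq,
        Module.finrank_pi, Fintype.card_fin]
    omega
  rw [Matrix.det_fin_two, hM00, hM01, hM10, hM11] at hdM
  -- trace 2 and the key quadratic relation
  have htr : θ 1 1 - 1 = -(θ 0 0 - 1) := by linear_combination hdet - hdM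
  have hx2 : (θ 0 0 - 1) * (θ 0 0 - 1) = -(θ 1 0 * θ 0 1) := by
    linear_combination -hdM + (θ 0 0 - 1) * htr
  -- gcd divides the diagonal entry
  have hgx : ((Int.gcd (θ 1 0) (θ 0 1) : ℤ)) ∣ (θ 0 0 - 1) := by
    rw [← Int.pow_dvd_pow_iff (two_ne_zero)]
    have : (θ 0 0 - 1) ^ 2 = -(θ 1 0 * θ 0 1) := by rw [sq]; exact hx2
    rw [this, sq]
    exact dvd_neg.mpr (mul_dvd_mul (Int.gcd_dvd_left _ _) (Int.gcd_dvd_right _ _))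
  by_cases hc : θ 0 1 = 0
  · -- second column vanishes; here θ 0 0 = 1
    have hx0 : θ 0 0 - 1 = 0 := by
      have := hx2
      rw [hc, mul_zero, neg_zero, mul_self_eq_zero] at this
      exact this
    have := coker_helper (θ - 1) 0 1 0 1 (θ 1 0) 0 (by ring)
      (by rw [hM00, hx0]; ring) (by rw [hM10]; ring)
      (by rw [hM01, hc]; ring) (by rw [hM11, htr, hx0]; ring)
    rwa [show Int.gcd (θ 1 0) 0 = Int.gcd (θ 1 0) (θ 0 1) by rw [hc]] at this
  · -- second column is nonzero
    set b := θ 1 0 with hb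
    set c := θ 0 1 with hcdef
    set x := θ 0 0 - 1 with hxdef
    have hw0 : (Int.gcd c x : ℤ) ≠ 0 := by
      simpa [Int.gcd_eq_zero_iff] using fun h _ => hc h
    set w : ℤ := (Int.gcd c x : ℤ) with hwdef
    have hwc : w ∣ c := (Int.gcd_dvd_left _ _)
    have hwx : w ∣ x := (Int.gcd_dvd_right _ _)
    have hv1 : c = w * (c / w) := (Int.mul_ediv_cancel' hwc).symm
    have hvx : x = w * (x / w) := (Int.mul_ediv_cancel' hwx).symm
    -- primitivity of (c/w, -(x/w))
    have hpos : 0 < Int.gcd c x := Nat.pos_of_ne_zero (by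
      intro h
      exact hw0 (by rw [hwdef, h, Nat.cast_zero]))
    have hprim : Int.gcd (c / w) (-(x / w)) = 1 := by
      rw [Int.gcd_def, Int.natAbs_neg, ← Int.gcd_def]
      exact Int.gcd_div_gcd_div_gcd hpos
    set p : ℤ := Int.gcdA (c / w) (-(x / w)) with hp
    set q : ℤ := Int.gcdB (c / w) (-(x / w)) with hq
    have hpq : p * (c / w) + q * (-(x / w)) = 1 := by
      have := Int.gcd_eq_gcd_ab (c / w) (-(x / w))
      rw [hprim] at this
      linear_combination -this
    have hbc : b * (c / w) = -(w * ((x / w) * (x / w))) := by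
      apply mul_left_cancel₀ hw0
      linear_combination (-b) * hv1 + hx2 + (-(x + w * (x / w))) * hvx
    have := coker_helper (θ - 1) (c / w) (-(x / w)) p q (p * x + q * b) w hpq
      (by rw [hM00]
          linear_combination (-x) * hpq + (-q) * hbc + (-(q * (x / w))) * hvx)
      (by rw [hM10]
          linear_combination (-b) * hpq + p * hbc + (p * (x / w)) * hvx)
      (by rw [hM01]; linear_combination hv1)
      (by rw [hM11, htr]; linear_combination -hvx)
    have hgcd : Int.gcd (p * x + q * b) w = Int.gcd b c := by
      apply Nat.dvd_antisymm
      · rw [← Int.natCast_dvd_natCast]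
        apply Int.dvd_coe_gcd
        · have h1 : (Int.gcd (p * x + q * b) w : ℤ) ∣ (p * x + q * b) := (Int.gcd_dvd_left _ _)
          have h2 : (Int.gcd (p * x + q * b) w : ℤ) ∣ w := (Int.gcd_dvd_right _ _)
          -- b = (p*x+q*b) * (-(x/w))
          have hbeq : b = (p * x + q * b) * (-(x / w)) := by
            linear_combination (-b) * hpq + p * hbc + (p * (x / w)) * hvx
          exact h1.trans ⟨-(x / w), hbeq⟩
        · have h2 : (Int.gcd (p * x + q * b) w : ℤ) ∣ w := (Int.gcd_dvd_right _ _)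
          exact h2.trans ⟨c / w, hv1⟩
      · rw [← Int.natCast_dvd_natCast]
        apply Int.dvd_coe_gcd
        · exact dvd_add (hgx.mul_left p) (((Int.gcd_dvd_left _ _)).mul_left q)
        · exact Int.dvd_coe_gcd (Int.gcd_dvd_right _ _) hgx
    rwa [hgcd] at this
end
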